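/- arXiv:2108.12852 — 4 statements merged into one kernel-verified Lean document; each statement's English description precedes it below -/
import Mathlib

section
/- Let V, D, E, F be real vector spaces, ▷ : D × E → E and ▷ : D × F → F bilinear maps, and {,} : E × E → F a bilinear map satisfying the derivation property X ▷ {Y₁, Y₂} = {X ▷ Y₁, Y₂} + {Y₁, X ▷ Y₂} for all X ∈ D, Y₁, Y₂ ∈ E. Then for every D-valued alternating k-form A, every E-valued alternating t₁-form B₁ and every E-valued alternating t₂-form B₂ on V, A ∧^▷ (B₁ ∧^{{,}} B₂) = (A ∧^▷ B₁) ∧^{{,}} B₂ + (−1)^{k t₁} B₁ ∧^{{,}} (A ∧^▷ B₂). -/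
/-! Wedge product of vector-valued alternating forms along a bilinear map,
given by the shuffle-sum formula
`(ω ∧_μ η)(v₁,…,v_{k₁+k₂}) = Σ_σ sgn(σ) μ(ω(v_{σ(1)},…,v_{σ(k₁)}), η(v_{σ(k₁+1)},…,v_{σ(k₁+k₂)}))`,
the sum ranging over (k₁,k₂)-shuffles σ. -/

/-- The finset of (k₁,k₂)-shuffles: permutations of `Fin (k₁+k₂)` that are strictly
increasing on the first `k₁` indices and on the last `k₂` indices. -/
def shuffleSet (k₁ k₂ : ℕ) : Finset (Equiv.Perm (Fin (k₁ + k₂))) :=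
  Finset.univ.filter fun σ =>
    (∀ i j : Fin k₁, i < j → σ (Fin.castAdd k₂ i) < σ (Fin.castAdd k₂ j)) ∧
    (∀ i j : Fin k₂, i < j → σ (Fin.natAdd k₁ i) < σ (Fin.natAdd k₁ j))

/-- The wedge product along a bilinear map `μ : E →ₗ F →ₗ W`, defined on the underlying
functions of vector-valued forms by the shuffle-sum formula. -/
def wedgeRaw {V E F W : Type*} [AddCommGroup E] [Module ℝ E] [AddCommGroup F] [Module ℝ F]
    [AddCommGroup W] [Module ℝ W] {k₁ k₂ : ℕ}
    (μ : E →ₗ[ℝ] F →ₗ[ℝ] W)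
    (ω : (Fin k₁ → V) → E) (η : (Fin k₂ → V) → F) :
    (Fin (k₁ + k₂) → V) → W :=
  fun v => ∑ σ ∈ shuffleSet k₁ k₂,
    (Equiv.Perm.sign σ : ℤ) •
      μ (ω fun i => v (σ (Fin.castAdd k₂ i))) (η fun i => v (σ (Fin.natAdd k₁ i)))

/-- Reinterpret a `k`-form as a `k'`-form along an equality of degrees `k = k'`. -/
def castRaw {V W : Type*} {k k' : ℕ} (h : k = k') (ω : (Fin k → V) → W) :
    (Fin k' → V) → W :=
  fun v => ω fun i => v (Fin.cast h i)

namespace Stmt7Aux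

open Equiv Finset


/-- Extend a permutation of `Fin n` to `Fin (m+n)`, acting as identity on the first block. -/
def padR (m : ℕ) {n : ℕ} (τ : Perm (Fin n)) : Perm (Fin (m + n)) :=
  finSumFinEquiv.permCongr (Equiv.sumCongr (Equiv.refl (Fin m)) τ)

/-- Extend a permutation of `Fin m` to `Fin (m+n)`, acting as identity on the last block. -/
def padL {m : ℕ} (n : ℕ) (τ : Perm (Fin m)) : Perm (Fin (m + n)) :=
  finSumFinEquiv.permCongr (Equiv.sumCongr τ (Equiv.refl (Fin n)))

@[simp] theorem padR_castAdd {m n : ℕ} (τ : Perm (Fin n)) (i : Fin m) :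
    padR m τ (Fin.castAdd n i) = Fin.castAdd n i := by
  simp [padR, Equiv.permCongr_apply]

@[simp] theorem padR_natAdd {m n : ℕ} (τ : Perm (Fin n)) (i : Fin n) :
    padR m τ (Fin.natAdd m i) = Fin.natAdd m (τ i) := by
  simp [padR, Equiv.permCongr_apply]

@[simp] theorem padL_castAdd {m n : ℕ} (τ : Perm (Fin m)) (i : Fin m) :
    padL n τ (Fin.castAdd n i) = Fin.castAdd n (τ i) := by
  simp [padL, Equiv.permCongr_apply]

@[simp] theorem padL_natAdd {m n : ℕ} (τ : Perm (Fin m)) (i : Fin n) :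
    padL n τ (Fin.natAdd m i) = Fin.natAdd m i := by
  simp [padL, Equiv.permCongr_apply]

theorem padR_mul {m n : ℕ} (τ τ' : Perm (Fin n)) :
    padR m (τ * τ') = padR m τ * padR m τ' := by
  ext x
  rcases h : finSumFinEquiv.symm x with i | j <;>
  · have hx : x = finSumFinEquiv (finSumFinEquiv.symm x) := (Equiv.apply_symm_apply _ _).symm
    rw [h] at hx
    subst hx
    simp [Perm.mul_apply]

theorem padL_mul {m n : ℕ} (τ τ' : Perm (Fin m)) :
    padL n (τ * τ') = padL n τ * padL n τ' := by
  ext x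
  rcases h : finSumFinEquiv.symm x with i | j <;>
  · have hx : x = finSumFinEquiv (finSumFinEquiv.symm x) := (Equiv.apply_symm_apply _ _).symm
    rw [h] at hx
    subst hx
    simp [Perm.mul_apply]

@[simp] theorem padR_one {m n : ℕ} : padR m (1 : Perm (Fin n)) = 1 := by
  ext x
  rcases h : finSumFinEquiv.symm x with i | j <;>
  · have hx : x = finSumFinEquiv (finSumFinEquiv.symm x) := (Equiv.apply_symm_apply _ _).symm
    rw [h] at hx
    subst hx
    simp

@[simp] theorem padL_one {m n : ℕ} : padL n (1 : Perm (Fin m)) = 1 := by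
  ext x
  rcases h : finSumFinEquiv.symm x with i | j <;>
  · have hx : x = finSumFinEquiv (finSumFinEquiv.symm x) := (Equiv.apply_symm_apply _ _).symm
    rw [h] at hx
    subst hx
    simp

@[simp] theorem sign_padR {m n : ℕ} (τ : Perm (Fin n)) :
    Equiv.Perm.sign (padR m τ) = Equiv.Perm.sign τ := by
  simp [padR, Equiv.Perm.sign_permCongr, Equiv.Perm.sign_sumCongr]

@[simp] theorem sign_padL {m n : ℕ} (τ : Perm (Fin m)) :
    Equiv.Perm.sign (padL n τ) = Equiv.Perm.sign τ := by
  simp [padL, Equiv.Perm.sign_permCongr, Equiv.Perm.sign_sumCongr]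

/-- Transport a permutation along an equality of sizes. -/
def pcast {m n : ℕ} (h : m = n) (p : Perm (Fin m)) : Perm (Fin n) :=
  (finCongr h).permCongr p

@[simp] theorem pcast_apply {m n : ℕ} (h : m = n) (p : Perm (Fin m)) (x : Fin m) :
    pcast h p (Fin.cast h x) = Fin.cast h (p x) := by
  simp [pcast, Equiv.permCongr_apply]

@[simp] theorem sign_pcast {m n : ℕ} (h : m = n) (p : Perm (Fin m)) :
    Equiv.Perm.sign (pcast h p) = Equiv.Perm.sign p := by
  simp [pcast, Equiv.Perm.sign_permCongr]

theorem pcast_mul {m n : ℕ} (h : m = n) (p q : Perm (Fin m)) :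
    pcast h (p * q) = pcast h p * pcast h q := by
  ext x
  simp [pcast, Equiv.permCongr_apply, Perm.mul_apply]

@[simp] theorem pcast_pcast_symm {m n : ℕ} (h : m = n) (p : Perm (Fin m)) :
    pcast h.symm (pcast h p) = p := by
  ext x
  simp [pcast, Equiv.permCongr_apply]

@[simp] theorem pcast_symm_pcast {m n : ℕ} (h : m = n) (p : Perm (Fin n)) :
    pcast h (pcast h.symm p) = p := by
  ext x
  simp [pcast, Equiv.permCongr_apply]

theorem strictMono_comp_iff {p q r : ℕ} {g : Fin q → Fin r} (hg : StrictMono g)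
    {u : Fin p → Fin q} : StrictMono (fun i => g (u i)) ↔ StrictMono u := by
  constructor
  · intro h i j hij
    exact hg.lt_iff_lt.mp (h hij)
  · intro h i j hij
    exact hg (h hij)

theorem eq_sort {n : ℕ} {α : Type*} [LinearOrder α] {f : Fin n → α}
    (hf : Function.Injective f) {s : Perm (Fin n)} (hs : Monotone (f ∘ s)) :
    s = Tuple.sort f :=
  Equiv.ext fun x => hf (congrFun (Tuple.comp_sort_eq_comp_iff_monotone.mpr hs) x)

/-- The set of `(a,b,c)`-triple shuffles of `Fin (a + (b + c))`. -/
def TS (a b c : ℕ) : Finset (Perm (Fin (a + (b + c)))) :=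
  Finset.univ.filter fun π =>
    (∀ i j : Fin a, i < j → π (Fin.castAdd (b + c) i) < π (Fin.castAdd (b + c) j)) ∧
    (∀ i j : Fin b, i < j →
      π (Fin.natAdd a (Fin.castAdd c i)) < π (Fin.natAdd a (Fin.castAdd c j))) ∧
    (∀ i j : Fin c, i < j →
      π (Fin.natAdd a (Fin.natAdd b i)) < π (Fin.natAdd a (Fin.natAdd b j)))

theorem mem_TS {a b c : ℕ} {π : Perm (Fin (a + (b + c)))} :
    π ∈ TS a b c ↔
    (∀ i j : Fin a, i < j → π (Fin.castAdd (b + c) i) < π (Fin.castAdd (b + c) j)) ∧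
    (∀ i j : Fin b, i < j →
      π (Fin.natAdd a (Fin.castAdd c i)) < π (Fin.natAdd a (Fin.castAdd c j))) ∧
    (∀ i j : Fin c, i < j →
      π (Fin.natAdd a (Fin.natAdd b i)) < π (Fin.natAdd a (Fin.natAdd b j))) := by
  simp [TS]

theorem mem_shuffleSet {k₁ k₂ : ℕ} {σ : Perm (Fin (k₁ + k₂))} :
    σ ∈ shuffleSet k₁ k₂ ↔
    (∀ i j : Fin k₁, i < j → σ (Fin.castAdd k₂ i) < σ (Fin.castAdd k₂ j)) ∧
    (∀ i j : Fin k₂, i < j → σ (Fin.natAdd k₁ i) < σ (Fin.natAdd k₁ j)) := by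
  simp [shuffleSet]

theorem finRotate_pow_val {n : ℕ} (hn : 0 < n) (j : ℕ) (x : Fin n) :
    (((finRotate n) ^ j) x : ℕ) = (x + j) % n := by
  cases n with
  | zero => omega
  | succ m =>
    induction j generalizing x with
    | zero => simp [Nat.mod_eq_of_lt x.isLt]
    | succ j ih =>
      rw [pow_succ', Equiv.Perm.mul_apply, finRotate_succ_apply]
      have h1 : ∀ y : Fin (m + 1), ((y + 1 : Fin (m + 1)) : ℕ) = ((y : ℕ) + 1) % (m + 1) := by
        intro y
        rw [Fin.add_def, Fin.val_one']
        show ((y : ℕ) + 1 % (m + 1)) % (m + 1) = _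
        rw [Nat.add_mod (y : ℕ) 1, Nat.mod_eq_of_lt y.isLt]
      calc ((((finRotate (m+1)) ^ j) x + 1 : Fin (m+1)) : ℕ)
          = ((((finRotate (m+1)) ^ j) x : ℕ) + 1) % (m+1) := h1 _
        _ = (((x : ℕ) + j) % (m + 1) + 1) % (m + 1) := by rw [ih x]
        _ = ((x : ℕ) + (j + 1)) % (m + 1) := by rw [Nat.mod_add_mod]; ring_nf

/-- Rotation by `b` as a permutation of `Fin (a+b)`. -/
def rot (a b : ℕ) : Perm (Fin (a + b)) := (finRotate (a + b)) ^ b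

theorem rot_val {a b : ℕ} (x : Fin (a + b)) : (rot a b x : ℕ) = ((x : ℕ) + b) % (a + b) :=
  finRotate_pow_val x.pos b x

theorem sign_finRotate_pow (n j : ℕ) :
    Equiv.Perm.sign ((finRotate n) ^ j) = (-1 : ℤˣ) ^ ((n - 1) * j) := by
  cases n with
  | zero => simp [Nat.zero_sub]
  | succ m => rw [map_pow, sign_finRotate, ← pow_mul, Nat.add_sub_cancel]

theorem sign_rot (a b : ℕ) : Equiv.Perm.sign (rot a b) = (-1 : ℤˣ) ^ (a * b) := by
  rw [rot, sign_finRotate_pow]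
  cases b with
  | zero => simp
  | succ b' =>
    have h : (a + (b' + 1) - 1) * (b' + 1) = a * (b' + 1) + b' * (b' + 1) := by
      have : a + (b' + 1) - 1 = a + b' := by omega
      rw [this]; ring
    rw [h, pow_add, (Nat.even_mul_succ_self b').neg_one_pow, mul_one]

theorem P1 {V W : Type*} [AddCommGroup W] {a b c : ℕ}
    (φ : (Fin a → V) → (Fin b → V) → (Fin c → V) → W) (v : Fin (a + (b + c)) → V) :
    ∑ σ ∈ shuffleSet a (b + c), ∑ τ ∈ shuffleSet b c,
      ((Equiv.Perm.sign σ : ℤ) * (Equiv.Perm.sign τ : ℤ)) •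
        φ (fun i => v (σ (Fin.castAdd (b + c) i)))
          (fun i => v (σ (Fin.natAdd a (τ (Fin.castAdd c i)))))
          (fun i => v (σ (Fin.natAdd a (τ (Fin.natAdd b i)))))
      = ∑ π ∈ TS a b c, (Equiv.Perm.sign π : ℤ) •
          φ (fun i => v (π (Fin.castAdd (b + c) i)))
            (fun i => v (π (Fin.natAdd a (Fin.castAdd c i))))
            (fun i => v (π (Fin.natAdd a (Fin.natAdd b i)))) := by
  rw [← Finset.sum_product']
  refine Finset.sum_nbij' (fun p => p.1 * padR a p.2)
    (fun π => (π * padR a (Tuple.sort fun j => π (Fin.natAdd a j)),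
               (Tuple.sort fun j => π (Fin.natAdd a j))⁻¹)) ?_ ?_ ?_ ?_ ?_
  · -- forward membership
    rintro ⟨σ, τ⟩ hp
    rw [Finset.mem_product] at hp
    obtain ⟨hσ, hτ⟩ := hp
    rw [mem_shuffleSet] at hσ hτ
    rw [mem_TS]
    refine ⟨fun i j hij => ?_, fun i j hij => ?_, fun i j hij => ?_⟩ <;>
      simp only [Perm.mul_apply, padR_castAdd, padR_natAdd]
    · exact hσ.1 i j hij
    · exact hσ.2 _ _ (hτ.1 i j hij)
    · exact hσ.2 _ _ (hτ.2 i j hij)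
  · -- backward membership
    intro π hπ
    rw [mem_TS] at hπ
    set f : Fin (b + c) → Fin (a + (b + c)) := fun j => π (Fin.natAdd a j) with hf
    have finj : Function.Injective f :=
      π.injective.comp ((Fin.strictMono_natAdd a).injective)
    set s := Tuple.sort f with hs
    have hstrict : StrictMono (f ∘ s) :=
      (Tuple.monotone_sort f).strictMono_of_injective (finj.comp s.injective)
    have hinv : ∀ x y : Fin (b + c), s⁻¹ x < s⁻¹ y ↔ f x < f y := by
      intro x y
      rw [← hstrict.lt_iff_lt (a := s⁻¹ x) (b := s⁻¹ y)]
      simp [Function.comp]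
    rw [Finset.mem_product, mem_shuffleSet, mem_shuffleSet]
    refine ⟨⟨fun i j hij => ?_, fun i j hij => ?_⟩, fun i j hij => ?_, fun i j hij => ?_⟩
    · simpa only [Perm.mul_apply, padR_castAdd] using hπ.1 i j hij
    · simp only [Perm.mul_apply, padR_natAdd]
      exact hstrict hij
    · exact (hinv _ _).mpr (hπ.2.1 i j hij)
    · exact (hinv _ _).mpr (hπ.2.2 i j hij)
  · -- left inverse
    rintro ⟨σ, τ⟩ hp
    rw [Finset.mem_product] at hp
    obtain ⟨hσ, hτ⟩ := hp
    rw [mem_shuffleSet] at hσ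
    have hg : StrictMono (fun j => σ (Fin.natAdd a j)) := fun i j hij => hσ.2 i j hij
    have hfs : (fun j => (σ * padR a τ) (Fin.natAdd a j)) = fun j => σ (Fin.natAdd a (τ j)) := by
      funext j; simp [Perm.mul_apply]
    have hmono : Monotone ((fun j => (σ * padR a τ) (Fin.natAdd a j)) ∘ ⇑τ⁻¹) := by
      have : ((fun j => (σ * padR a τ) (Fin.natAdd a j)) ∘ ⇑τ⁻¹)
          = fun j => σ (Fin.natAdd a j) := by
        funext j; simp [Function.comp, Perm.mul_apply]
      rw [this]
      exact hg.monotone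
    have finj : Function.Injective (fun j => (σ * padR a τ) (Fin.natAdd a j)) :=
      (σ * padR a τ).injective.comp ((Fin.strictMono_natAdd a).injective)
    have hsort : Tuple.sort (fun j => (σ * padR a τ) (Fin.natAdd a j)) = τ⁻¹ :=
      (eq_sort finj hmono).symm
    have h1 : σ * padR a τ * padR a (Tuple.sort fun j => (σ * padR a τ) (Fin.natAdd a j)) = σ := by
      rw [hsort, mul_assoc, ← padR_mul, mul_inv_cancel, padR_one, mul_one]
    have h2 : (Tuple.sort fun j => (σ * padR a τ) (Fin.natAdd a j))⁻¹ = τ := by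
      rw [hsort, inv_inv]
    exact Prod.ext h1 h2
  · -- right inverse
    intro π hπ
    simp [mul_assoc, ← padR_mul]
  · -- values
    rintro ⟨σ, τ⟩ hp
    have e1 : (fun i => v ((σ * padR a τ) (Fin.castAdd (b + c) i)))
        = fun i => v (σ (Fin.castAdd (b + c) i)) := by
      funext i; simp [Perm.mul_apply]
    have e2 : (fun i => v ((σ * padR a τ) (Fin.natAdd a (Fin.castAdd c i))))
        = fun i => v (σ (Fin.natAdd a (τ (Fin.castAdd c i)))) := by
      funext i; simp [Perm.mul_apply]
    have e3 : (fun i => v ((σ * padR a τ) (Fin.natAdd a (Fin.natAdd b i))))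
        = fun i => v (σ (Fin.natAdd a (τ (Fin.natAdd b i)))) := by
      funext i; simp [Perm.mul_apply]
    rw [e1, e2, e3, Equiv.Perm.sign_mul, sign_padR, Units.val_mul]

theorem cast_lt_cast {m n : ℕ} (h : m = n) {x y : Fin m} :
    Fin.cast h x < Fin.cast h y ↔ x < y := Iff.rfl

theorem P2 {V W : Type*} [AddCommGroup W] {a b c : ℕ} (h : a + b + c = a + (b + c))
    (φ : (Fin a → V) → (Fin b → V) → (Fin c → V) → W) (v : Fin (a + (b + c)) → V) :
    ∑ σ ∈ shuffleSet (a + b) c, ∑ τ ∈ shuffleSet a b,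
      ((Equiv.Perm.sign σ : ℤ) * (Equiv.Perm.sign τ : ℤ)) •
        φ (fun i => v (Fin.cast h (σ (Fin.castAdd c (τ (Fin.castAdd b i))))))
          (fun i => v (Fin.cast h (σ (Fin.castAdd c (τ (Fin.natAdd a i))))))
          (fun i => v (Fin.cast h (σ (Fin.natAdd (a + b) i))))
      = ∑ π ∈ TS a b c, (Equiv.Perm.sign π : ℤ) •
          φ (fun i => v (π (Fin.castAdd (b + c) i)))
            (fun i => v (π (Fin.natAdd a (Fin.castAdd c i))))
            (fun i => v (π (Fin.natAdd a (Fin.natAdd b i)))) := by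
  have b1 : ∀ i : Fin a, Fin.castAdd (b + c) i
      = Fin.cast h (Fin.castAdd c (Fin.castAdd b i)) := fun i => by
    simp [Fin.ext_iff]
  have b2 : ∀ i : Fin b, Fin.natAdd a (Fin.castAdd c i)
      = Fin.cast h (Fin.castAdd c (Fin.natAdd a i)) := fun i => by
    simp [Fin.ext_iff]
  have b3 : ∀ i : Fin c, Fin.natAdd a (Fin.natAdd b i)
      = Fin.cast h (Fin.natAdd (a + b) i) := fun i => by
    simp [Fin.ext_iff]; omega
  rw [← Finset.sum_product']
  refine Finset.sum_nbij' (fun p => pcast h (p.1 * padL c p.2))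
    (fun π => (pcast h.symm π * padL c (Tuple.sort fun j => pcast h.symm π (Fin.castAdd c j)),
               (Tuple.sort fun j => pcast h.symm π (Fin.castAdd c j))⁻¹)) ?_ ?_ ?_ ?_ ?_
  · rintro ⟨σ, τ⟩ hp
    rw [Finset.mem_product] at hp
    obtain ⟨hσ, hτ⟩ := hp
    rw [mem_shuffleSet] at hσ hτ
    rw [mem_TS]
    refine ⟨fun i j hij => ?_, fun i j hij => ?_, fun i j hij => ?_⟩ <;>
      simp only [b1, b2, b3, pcast_apply, Perm.mul_apply, padL_castAdd, padL_natAdd,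
        cast_lt_cast]
    · exact hσ.1 _ _ (hτ.1 i j hij)
    · exact hσ.1 _ _ (hτ.2 i j hij)
    · exact hσ.2 i j hij
  · intro π hπ
    rw [mem_TS] at hπ
    set π' := pcast h.symm π with hπ'
    have hap : ∀ y : Fin (a + (b + c)), π' (Fin.cast h.symm y) = Fin.cast h.symm (π y) :=
      fun y => pcast_apply h.symm π y
    set f : Fin (a + b) → Fin (a + b + c) := fun j => π' (Fin.castAdd c j) with hf
    have finj : Function.Injective f :=
      π'.injective.comp (Fin.castAdd_injective _ _)
    set s := Tuple.sort f with hs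
    have hstrict : StrictMono (f ∘ s) :=
      (Tuple.monotone_sort f).strictMono_of_injective (finj.comp s.injective)
    have hinv : ∀ x y : Fin (a + b), s⁻¹ x < s⁻¹ y ↔ f x < f y := by
      intro x y
      rw [← hstrict.lt_iff_lt (a := s⁻¹ x) (b := s⁻¹ y)]
      simp [Function.comp]
    have f1 : ∀ i : Fin a, f (Fin.castAdd b i) = Fin.cast h.symm (π (Fin.castAdd (b + c) i)) := by
      intro i
      have : Fin.castAdd c (Fin.castAdd b i)
          = Fin.cast h.symm (Fin.castAdd (b + c) i) := by simp [Fin.ext_iff]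
      rw [hf]; simp only [this, hap]
    have f2 : ∀ i : Fin b, f (Fin.natAdd a i)
        = Fin.cast h.symm (π (Fin.natAdd a (Fin.castAdd c i))) := by
      intro i
      have : Fin.castAdd c (Fin.natAdd a i)
          = Fin.cast h.symm (Fin.natAdd a (Fin.castAdd c i)) := by simp [Fin.ext_iff]
      rw [hf]; simp only [this, hap]
    rw [Finset.mem_product, mem_shuffleSet, mem_shuffleSet]
    refine ⟨⟨fun i j hij => ?_, fun i j hij => ?_⟩, fun i j hij => ?_, fun i j hij => ?_⟩
    · simp only [Perm.mul_apply, padL_castAdd]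
      exact hstrict hij
    · simp only [Perm.mul_apply, padL_natAdd]
      have e : ∀ i : Fin c, Fin.natAdd (a + b) i
          = Fin.cast h.symm (Fin.natAdd a (Fin.natAdd b i)) := fun i => by
        simp [Fin.ext_iff]; omega
      rw [e i, e j, hap, hap, cast_lt_cast]
      exact hπ.2.2 i j hij
    · rw [hinv, f1 i, f1 j, cast_lt_cast]
      exact hπ.1 i j hij
    · rw [hinv, f2 i, f2 j, cast_lt_cast]
      exact hπ.2.1 i j hij
  · rintro ⟨σ, τ⟩ hp
    rw [Finset.mem_product] at hp
    obtain ⟨hσ, hτ⟩ := hp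
    rw [mem_shuffleSet] at hσ
    have hg : StrictMono (fun j => σ (Fin.castAdd c j)) := fun i j hij => hσ.1 i j hij
    have hπ'eq : pcast h.symm (pcast h (σ * padL c τ)) = σ * padL c τ := pcast_pcast_symm h _
    have hmono : Monotone ((fun j => (σ * padL c τ) (Fin.castAdd c j)) ∘ ⇑τ⁻¹) := by
      have : ((fun j => (σ * padL c τ) (Fin.castAdd c j)) ∘ ⇑τ⁻¹)
          = fun j => σ (Fin.castAdd c j) := by
        funext j; simp [Function.comp, Perm.mul_apply]
      rw [this]
      exact hg.monotone
    have finj : Function.Injective (fun j => (σ * padL c τ) (Fin.castAdd c j)) :=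
      (σ * padL c τ).injective.comp (Fin.castAdd_injective _ _)
    have hsort : Tuple.sort (fun j => (σ * padL c τ) (Fin.castAdd c j)) = τ⁻¹ :=
      (eq_sort finj hmono).symm
    have h1 : pcast h.symm (pcast h (σ * padL c τ))
        * padL c (Tuple.sort fun j => pcast h.symm (pcast h (σ * padL c τ)) (Fin.castAdd c j))
        = σ := by
      rw [hπ'eq, hsort, mul_assoc, ← padL_mul, mul_inv_cancel, padL_one, mul_one]
    have h2 : (Tuple.sort fun j => pcast h.symm (pcast h (σ * padL c τ)) (Fin.castAdd c j))⁻¹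
        = τ := by
      rw [hπ'eq, hsort, inv_inv]
    exact Prod.ext h1 h2
  · intro π hπ
    show pcast h (_ * _) = π
    rw [mul_assoc, ← padL_mul, mul_inv_cancel, padL_one, mul_one, pcast_symm_pcast]
  · rintro ⟨σ, τ⟩ hp
    have e1 : (fun i => v (pcast h (σ * padL c τ) (Fin.castAdd (b + c) i)))
        = fun i => v (Fin.cast h (σ (Fin.castAdd c (τ (Fin.castAdd b i))))) := by
      funext i; rw [b1 i, pcast_apply]; simp [Perm.mul_apply]
    have e2 : (fun i => v (pcast h (σ * padL c τ) (Fin.natAdd a (Fin.castAdd c i))))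
        = fun i => v (Fin.cast h (σ (Fin.castAdd c (τ (Fin.natAdd a i))))) := by
      funext i; rw [b2 i, pcast_apply]; simp [Perm.mul_apply]
    have e3 : (fun i => v (pcast h (σ * padL c τ) (Fin.natAdd a (Fin.natAdd b i))))
        = fun i => v (Fin.cast h (σ (Fin.natAdd (a + b) i))) := by
      funext i; rw [b3 i, pcast_apply]; simp [Perm.mul_apply]
    show _ = (Equiv.Perm.sign (pcast h (σ * padL c τ)) : ℤ) • _
    rw [e1, e2, e3, sign_pcast, Equiv.Perm.sign_mul, sign_padL, Units.val_mul]

/-- The permutation of `Fin (a+(b+c))` swapping the first two blocks. -/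
noncomputable def bswap (a b c : ℕ) : Perm (Fin (a + (b + c))) :=
  pcast (Nat.add_assoc a b c) (padL c (rot a b))

theorem bswap_blk1 {a b c : ℕ} (i : Fin a) :
    bswap a b c (Fin.castAdd (b + c) i)
      = Fin.cast (Nat.add_left_comm b a c)
          (Fin.natAdd b (Fin.castAdd c i)) := by
  have e : Fin.castAdd (b + c) i
      = Fin.cast (Nat.add_assoc a b c)
          (Fin.castAdd c (Fin.castAdd b i)) := by simp [Fin.ext_iff]
  rw [bswap, e, pcast_apply, padL_castAdd]
  have hlt : (i : ℕ) + b < a + b := by have := i.isLt; omega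
  simp only [Fin.ext_iff, Fin.coe_cast, Fin.coe_castAdd, Fin.coe_natAdd]
  rw [rot_val]
  simp only [Fin.coe_castAdd]
  rw [Nat.mod_eq_of_lt hlt]
  omega

theorem bswap_blk2 {a b c : ℕ} (j : Fin b) :
    bswap a b c (Fin.natAdd a (Fin.castAdd c j))
      = Fin.cast (Nat.add_left_comm b a c) (Fin.castAdd (a + c) j) := by
  have e : Fin.natAdd a (Fin.castAdd c j)
      = Fin.cast (Nat.add_assoc a b c)
          (Fin.castAdd c (Fin.natAdd a j)) := by simp [Fin.ext_iff]
  rw [bswap, e, pcast_apply, padL_castAdd]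
  simp only [Fin.ext_iff, Fin.coe_cast, Fin.coe_castAdd, Fin.coe_natAdd]
  rw [rot_val]
  simp only [Fin.coe_natAdd]
  have e2 : a + (j : ℕ) + b = (a + b) + (j : ℕ) := by omega
  rw [e2, Nat.add_mod_left]
  exact Nat.mod_eq_of_lt (by have := j.isLt; omega)

theorem bswap_blk3 {a b c : ℕ} (l : Fin c) :
    bswap a b c (Fin.natAdd a (Fin.natAdd b l))
      = Fin.cast (Nat.add_left_comm b a c)
          (Fin.natAdd b (Fin.natAdd a l)) := by
  have e : Fin.natAdd a (Fin.natAdd b l)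
      = Fin.cast (Nat.add_assoc a b c)
          (Fin.natAdd (a + b) l) := by simp [Fin.ext_iff]; omega
  rw [bswap, e, pcast_apply, padL_natAdd]
  simp [Fin.ext_iff]; omega

theorem sign_bswap (a b c : ℕ) :
    Equiv.Perm.sign (bswap a b c) = (-1 : ℤˣ) ^ (a * b) := by
  rw [bswap, sign_pcast, sign_padL, sign_rot]

theorem bswap_inv_1 {a b c : ℕ} (i : Fin a) :
    (bswap a b c)⁻¹ (Fin.cast (Nat.add_left_comm b a c)
      (Fin.natAdd b (Fin.castAdd c i))) = Fin.castAdd (b + c) i := by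
  rw [← bswap_blk1]
  exact (bswap a b c).symm_apply_apply _

theorem bswap_inv_2 {a b c : ℕ} (j : Fin b) :
    (bswap a b c)⁻¹ (Fin.cast (Nat.add_left_comm b a c)
      (Fin.castAdd (a + c) j)) = Fin.natAdd a (Fin.castAdd c j) := by
  rw [← bswap_blk2]
  exact (bswap a b c).symm_apply_apply _

theorem bswap_inv_3 {a b c : ℕ} (l : Fin c) :
    (bswap a b c)⁻¹ (Fin.cast (Nat.add_left_comm b a c)
      (Fin.natAdd b (Fin.natAdd a l))) = Fin.natAdd a (Fin.natAdd b l) := by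
  rw [← bswap_blk3]
  exact (bswap a b c).symm_apply_apply _

theorem P3 {V W : Type*} [AddCommGroup W] {a b c : ℕ} (h : b + (a + c) = a + (b + c))
    (φ : (Fin a → V) → (Fin b → V) → (Fin c → V) → W) (v : Fin (a + (b + c)) → V) :
    ∑ σ ∈ shuffleSet b (a + c), ∑ τ ∈ shuffleSet a c,
      ((Equiv.Perm.sign σ : ℤ) * (Equiv.Perm.sign τ : ℤ)) •
        φ (fun i => v (Fin.cast h (σ (Fin.natAdd b (τ (Fin.castAdd c i))))))
          (fun i => v (Fin.cast h (σ (Fin.castAdd (a + c) i))))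
          (fun i => v (Fin.cast h (σ (Fin.natAdd b (τ (Fin.natAdd a i))))))
      = ∑ π ∈ TS a b c, ((-1 : ℤ) ^ (a * b) * (Equiv.Perm.sign π : ℤ)) •
          φ (fun i => v (π (Fin.castAdd (b + c) i)))
            (fun i => v (π (Fin.natAdd a (Fin.castAdd c i))))
            (fun i => v (π (Fin.natAdd a (Fin.natAdd b i)))) := by
  have ap1 : ∀ (σ : Perm (Fin (b + (a + c)))) (τ : Perm (Fin (a + c))) (i : Fin a),
      (pcast h (σ * padR b τ) * bswap a b c) (Fin.castAdd (b + c) i)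
        = Fin.cast h (σ (Fin.natAdd b (τ (Fin.castAdd c i)))) := by
    intro σ τ i
    rw [Perm.mul_apply, bswap_blk1, pcast_apply]
    simp [Perm.mul_apply]
  have ap2 : ∀ (σ : Perm (Fin (b + (a + c)))) (τ : Perm (Fin (a + c))) (j : Fin b),
      (pcast h (σ * padR b τ) * bswap a b c) (Fin.natAdd a (Fin.castAdd c j))
        = Fin.cast h (σ (Fin.castAdd (a + c) j)) := by
    intro σ τ j
    rw [Perm.mul_apply, bswap_blk2, pcast_apply]
    simp [Perm.mul_apply]
  have ap3 : ∀ (σ : Perm (Fin (b + (a + c)))) (τ : Perm (Fin (a + c))) (l : Fin c),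
      (pcast h (σ * padR b τ) * bswap a b c) (Fin.natAdd a (Fin.natAdd b l))
        = Fin.cast h (σ (Fin.natAdd b (τ (Fin.natAdd a l)))) := by
    intro σ τ l
    rw [Perm.mul_apply, bswap_blk3, pcast_apply]
    simp [Perm.mul_apply]
  rw [← Finset.sum_product']
  refine Finset.sum_nbij' (fun p => pcast h (p.1 * padR b p.2) * bswap a b c)
    (fun π =>
      (pcast h.symm (π * (bswap a b c)⁻¹)
         * padR b (Tuple.sort fun j => pcast h.symm (π * (bswap a b c)⁻¹) (Fin.natAdd b j)),
       (Tuple.sort fun j => pcast h.symm (π * (bswap a b c)⁻¹) (Fin.natAdd b j))⁻¹))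
    ?_ ?_ ?_ ?_ ?_
  · rintro ⟨σ, τ⟩ hp
    rw [Finset.mem_product] at hp
    obtain ⟨hσ, hτ⟩ := hp
    rw [mem_shuffleSet] at hσ hτ
    rw [mem_TS]
    refine ⟨fun i j hij => ?_, fun i j hij => ?_, fun i j hij => ?_⟩
    · rw [ap1, ap1, cast_lt_cast]
      exact hσ.2 _ _ (hτ.1 i j hij)
    · rw [ap2, ap2, cast_lt_cast]
      exact hσ.1 i j hij
    · rw [ap3, ap3, cast_lt_cast]
      exact hσ.2 _ _ (hτ.2 i j hij)
  · intro π hπ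
    rw [mem_TS] at hπ
    set π₀ := pcast h.symm (π * (bswap a b c)⁻¹) with hπ₀
    have g1 : ∀ i : Fin a, π₀ (Fin.natAdd b (Fin.castAdd c i))
        = Fin.cast h.symm (π (Fin.castAdd (b + c) i)) := by
      intro i
      have e : Fin.natAdd b (Fin.castAdd c i)
          = Fin.cast h.symm (Fin.cast h (Fin.natAdd b (Fin.castAdd c i))) := by
        simp [Fin.ext_iff]
      rw [hπ₀, e, pcast_apply, Perm.mul_apply, bswap_inv_1]
    have g2 : ∀ j : Fin b, π₀ (Fin.castAdd (a + c) j)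
        = Fin.cast h.symm (π (Fin.natAdd a (Fin.castAdd c j))) := by
      intro j
      have e : Fin.castAdd (a + c) j
          = Fin.cast h.symm (Fin.cast h (Fin.castAdd (a + c) j)) := by
        simp [Fin.ext_iff]
      rw [hπ₀, e, pcast_apply, Perm.mul_apply, bswap_inv_2]
    have g3 : ∀ l : Fin c, π₀ (Fin.natAdd b (Fin.natAdd a l))
        = Fin.cast h.symm (π (Fin.natAdd a (Fin.natAdd b l))) := by
      intro l
      have e : Fin.natAdd b (Fin.natAdd a l)
          = Fin.cast h.symm (Fin.cast h (Fin.natAdd b (Fin.natAdd a l))) := by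
        simp [Fin.ext_iff]
      rw [hπ₀, e, pcast_apply, Perm.mul_apply, bswap_inv_3]
    set f : Fin (a + c) → Fin (b + (a + c)) := fun j => π₀ (Fin.natAdd b j) with hf
    have finj : Function.Injective f :=
      π₀.injective.comp ((Fin.strictMono_natAdd b).injective)
    set s := Tuple.sort f with hs
    have hstrict : StrictMono (f ∘ s) :=
      (Tuple.monotone_sort f).strictMono_of_injective (finj.comp s.injective)
    have hinv : ∀ x y : Fin (a + c), s⁻¹ x < s⁻¹ y ↔ f x < f y := by
      intro x y
      rw [← hstrict.lt_iff_lt (a := s⁻¹ x) (b := s⁻¹ y)]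
      simp [Function.comp]
    rw [Finset.mem_product, mem_shuffleSet, mem_shuffleSet]
    refine ⟨⟨fun i j hij => ?_, fun i j hij => ?_⟩, fun i j hij => ?_, fun i j hij => ?_⟩
    · simp only [Perm.mul_apply, padR_castAdd]
      rw [g2 i, g2 j, cast_lt_cast]
      exact hπ.2.1 i j hij
    · simp only [Perm.mul_apply, padR_natAdd]
      exact hstrict hij
    · rw [hinv]
      show f (Fin.castAdd c i) < f (Fin.castAdd c j)
      rw [hf]
      simp only []
      rw [g1 i, g1 j, cast_lt_cast]
      exact hπ.1 i j hij
    · rw [hinv]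
      show f (Fin.natAdd a i) < f (Fin.natAdd a j)
      rw [hf]
      simp only []
      rw [g3 i, g3 j, cast_lt_cast]
      exact hπ.2.2 i j hij
  · rintro ⟨σ, τ⟩ hp
    rw [Finset.mem_product] at hp
    obtain ⟨hσ, hτ⟩ := hp
    rw [mem_shuffleSet] at hσ
    have hq : pcast h (σ * padR b τ) * bswap a b c * (bswap a b c)⁻¹
        = pcast h (σ * padR b τ) := mul_inv_cancel_right _ _
    have hπ₀ : pcast h.symm (pcast h (σ * padR b τ) * bswap a b c * (bswap a b c)⁻¹)
        = σ * padR b τ := by rw [hq, pcast_pcast_symm]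
    have hg : StrictMono (fun j => σ (Fin.natAdd b j)) := fun i j hij => hσ.2 i j hij
    have hmono : Monotone ((fun j => (σ * padR b τ) (Fin.natAdd b j)) ∘ ⇑τ⁻¹) := by
      have : ((fun j => (σ * padR b τ) (Fin.natAdd b j)) ∘ ⇑τ⁻¹)
          = fun j => σ (Fin.natAdd b j) := by
        funext j; simp [Function.comp, Perm.mul_apply]
      rw [this]
      exact hg.monotone
    have finj : Function.Injective (fun j => (σ * padR b τ) (Fin.natAdd b j)) :=
      (σ * padR b τ).injective.comp ((Fin.strictMono_natAdd b).injective)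
    have hsort : Tuple.sort (fun j => (σ * padR b τ) (Fin.natAdd b j)) = τ⁻¹ :=
      (eq_sort finj hmono).symm
    have h1 : pcast h.symm (pcast h (σ * padR b τ) * bswap a b c * (bswap a b c)⁻¹)
        * padR b (Tuple.sort fun j =>
            pcast h.symm (pcast h (σ * padR b τ) * bswap a b c * (bswap a b c)⁻¹)
              (Fin.natAdd b j))
        = σ := by
      rw [hπ₀, hsort, mul_assoc, ← padR_mul, mul_inv_cancel, padR_one, mul_one]
    have h2 : (Tuple.sort fun j =>
        pcast h.symm (pcast h (σ * padR b τ) * bswap a b c * (bswap a b c)⁻¹)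
          (Fin.natAdd b j))⁻¹ = τ := by
      rw [hπ₀, hsort, inv_inv]
    exact Prod.ext h1 h2
  · intro π hπ
    show pcast h (_ * _) * bswap a b c = π
    rw [mul_assoc, ← padR_mul, mul_inv_cancel, padR_one, mul_one, pcast_symm_pcast,
      inv_mul_cancel_right]
  · rintro ⟨σ, τ⟩ hp
    have e1 : (fun i => v ((pcast h (σ * padR b τ) * bswap a b c) (Fin.castAdd (b + c) i)))
        = fun i => v (Fin.cast h (σ (Fin.natAdd b (τ (Fin.castAdd c i))))) := by
      funext i; rw [ap1]
    have e2 : (fun i => v ((pcast h (σ * padR b τ) * bswap a b c)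
          (Fin.natAdd a (Fin.castAdd c i))))
        = fun i => v (Fin.cast h (σ (Fin.castAdd (a + c) i))) := by
      funext i; rw [ap2]
    have e3 : (fun i => v ((pcast h (σ * padR b τ) * bswap a b c)
          (Fin.natAdd a (Fin.natAdd b i))))
        = fun i => v (Fin.cast h (σ (Fin.natAdd b (τ (Fin.natAdd a i))))) := by
      funext i; rw [ap3]
    show _ = ((-1 : ℤ) ^ (a * b)
        * (Equiv.Perm.sign (pcast h (σ * padR b τ) * bswap a b c) : ℤ)) • _
    rw [e1, e2, e3, Equiv.Perm.sign_mul, sign_pcast, Equiv.Perm.sign_mul, sign_padR,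
      sign_bswap]
    congr 1
    push_cast
    have hsq : ((-1 : ℤ) ^ (a * b)) * ((-1 : ℤ) ^ (a * b)) = 1 := by
      rw [← mul_pow]; norm_num
    rw [show ∀ x y : ℤ, (-1 : ℤ) ^ (a * b) * (x * y * (-1) ^ (a * b))
        = x * y * ((-1 : ℤ) ^ (a * b) * (-1) ^ (a * b)) from fun x y => by ring,
      hsq, mul_one]

theorem expandR {V E F₁ F₂ F W : Type*}
    [AddCommGroup E] [Module ℝ E] [AddCommGroup F₁] [Module ℝ F₁]
    [AddCommGroup F₂] [Module ℝ F₂] [AddCommGroup F] [Module ℝ F]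
    [AddCommGroup W] [Module ℝ W] {a b c : ℕ}
    (μ : E →ₗ[ℝ] F →ₗ[ℝ] W) (ν : F₁ →ₗ[ℝ] F₂ →ₗ[ℝ] F)
    (ω : (Fin a → V) → E) (η₁ : (Fin b → V) → F₁) (η₂ : (Fin c → V) → F₂)
    (v : Fin (a + (b + c)) → V) :
    wedgeRaw μ ω (wedgeRaw ν η₁ η₂) v
      = ∑ σ ∈ shuffleSet a (b + c), ∑ τ ∈ shuffleSet b c,
          ((Equiv.Perm.sign σ : ℤ) * (Equiv.Perm.sign τ : ℤ)) •
            μ (ω fun i => v (σ (Fin.castAdd (b + c) i)))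
              (ν (η₁ fun i => v (σ (Fin.natAdd a (τ (Fin.castAdd c i)))))
                 (η₂ fun i => v (σ (Fin.natAdd a (τ (Fin.natAdd b i)))))) := by
  unfold wedgeRaw
  refine Finset.sum_congr rfl fun σ _ => ?_
  rw [map_sum, Finset.smul_sum]
  refine Finset.sum_congr rfl fun τ _ => ?_
  rw [map_zsmul, smul_smul]

theorem expandL {V E₁ E₂ E F W : Type*}
    [AddCommGroup E₁] [Module ℝ E₁] [AddCommGroup E₂] [Module ℝ E₂]
    [AddCommGroup E] [Module ℝ E] [AddCommGroup F] [Module ℝ F]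
    [AddCommGroup W] [Module ℝ W] {a b c : ℕ}
    (μ : E →ₗ[ℝ] F →ₗ[ℝ] W) (ν : E₁ →ₗ[ℝ] E₂ →ₗ[ℝ] E)
    (ω₁ : (Fin a → V) → E₁) (ω₂ : (Fin b → V) → E₂) (η : (Fin c → V) → F)
    (v : Fin (a + b + c) → V) :
    wedgeRaw μ (wedgeRaw ν ω₁ ω₂) η v
      = ∑ σ ∈ shuffleSet (a + b) c, ∑ τ ∈ shuffleSet a b,
          ((Equiv.Perm.sign σ : ℤ) * (Equiv.Perm.sign τ : ℤ)) •
            μ (ν (ω₁ fun i => v (σ (Fin.castAdd c (τ (Fin.castAdd b i)))))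
                 (ω₂ fun i => v (σ (Fin.castAdd c (τ (Fin.natAdd a i))))))
              (η fun i => v (σ (Fin.natAdd (a + b) i))) := by
  unfold wedgeRaw
  refine Finset.sum_congr rfl fun σ _ => ?_
  rw [map_sum, LinearMap.coe_sum, Finset.sum_apply, Finset.smul_sum]
  refine Finset.sum_congr rfl fun τ _ => ?_
  rw [map_zsmul, LinearMap.smul_apply, smul_smul]


end Stmt7Aux

open Stmt7Aux

/-- if `▷ : D × E → E`, `▷ : D × F → F` are bilinear and `{,} : E × E → F`
is bilinear with the derivation property `X ▷ {Y₁,Y₂} = {X ▷ Y₁, Y₂} + {Y₁, X ▷ Y₂}`, then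
for a `D`-valued alternating `k`-form `A` and `E`-valued alternating forms `B₁`, `B₂` of
degrees `t₁`, `t₂` on `V`,
`A ∧^▷ (B₁ ∧^{{,}} B₂) = (A ∧^▷ B₁) ∧^{{,}} B₂ + (−1)^{k t₁} B₁ ∧^{{,}} (A ∧^▷ B₂)`. -/
theorem stmt7 {V D E F : Type*} [AddCommGroup V] [Module ℝ V]
    [AddCommGroup D] [Module ℝ D] [AddCommGroup E] [Module ℝ E]
    [AddCommGroup F] [Module ℝ F]
    (ρE : D →ₗ[ℝ] E →ₗ[ℝ] E) (ρF : D →ₗ[ℝ] F →ₗ[ℝ] F) (pf : E →ₗ[ℝ] E →ₗ[ℝ] F)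
    (hder : ∀ (X : D) (Y₁ Y₂ : E), ρF X (pf Y₁ Y₂) = pf (ρE X Y₁) Y₂ + pf Y₁ (ρE X Y₂))
    {k t₁ t₂ : ℕ} (A : AlternatingMap ℝ V D (Fin k))
    (B₁ : AlternatingMap ℝ V E (Fin t₁)) (B₂ : AlternatingMap ℝ V E (Fin t₂)) :
    wedgeRaw ρF ⇑A (wedgeRaw pf ⇑B₁ ⇑B₂)
      = castRaw (show k + t₁ + t₂ = k + (t₁ + t₂) by omega)
          (wedgeRaw pf (wedgeRaw ρE ⇑A ⇑B₁) ⇑B₂)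
        + (-1 : ℝ) ^ (k * t₁) • castRaw (show t₁ + (k + t₂) = k + (t₁ + t₂) by omega)
          (wedgeRaw pf ⇑B₁ (wedgeRaw ρE ⇑A ⇑B₂)) := by
  have h1 : k + t₁ + t₂ = k + (t₁ + t₂) := by omega
  have h2 : t₁ + (k + t₂) = k + (t₁ + t₂) := by omega
  funext v
  have L := (expandR ρF pf ⇑A ⇑B₁ ⇑B₂ v).trans
    (P1 (fun x y z => ρF (A x) (pf (B₁ y) (B₂ z))) v)
  have R1 := (expandL pf ρE ⇑A ⇑B₁ ⇑B₂ (fun i => v (Fin.cast h1 i))).trans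
    (P2 h1 (fun x y z => pf (ρE (A x) (B₁ y)) (B₂ z)) v)
  have R2 := (expandR pf ρE ⇑B₁ ⇑A ⇑B₂ (fun i => v (Fin.cast h2 i))).trans
    (P3 h2 (fun x y z => pf (B₁ y) (ρE (A x) (B₂ z))) v)
  show wedgeRaw ρF ⇑A (wedgeRaw pf ⇑B₁ ⇑B₂) v
      = wedgeRaw pf (wedgeRaw ρE ⇑A ⇑B₁) ⇑B₂ (fun i => v (Fin.cast h1 i))
        + (-1 : ℝ) ^ (k * t₁) • wedgeRaw pf ⇑B₁ (wedgeRaw ρE ⇑A ⇑B₂)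
            (fun i => v (Fin.cast h2 i))
  rw [L, R1, R2, Finset.smul_sum]
  have hsc : ∀ (s : ℤ) (w : F),
      (-1 : ℝ) ^ (k * t₁) • ((-1 : ℤ) ^ (k * t₁) * s) • w = s • w := by
    intro s w
    rw [mul_smul, ← Int.cast_smul_eq_zsmul ℝ ((-1 : ℤ) ^ (k * t₁)) (s • w), smul_smul]
    push_cast
    rw [← mul_pow]
    norm_num
  rw [← Finset.sum_add_distrib]
  refine Finset.sum_congr rfl fun π _ => ?_
  rw [hsc, ← smul_add, hder]
end

section
/- Let V, g, W be real vector spaces, ▷ : g × W → W bilinear, ⟨,⟩_g a symmetric bilinear form on g, ⟨,⟩_W a symmetric bilinear form on W, and σ : W × W → g a bilinear map satisfying ⟨σ(Y, Y'), X⟩_g = −⟨Y, X ▷ Y'⟩_W for all X ∈ g, Y, Y' ∈ W. For W-valued alternating forms B₁, B₂ on V of degrees t₁, t₂ define σ̄(B₁, B₂) := B₁ ∧_σ B₂. Then for every g-valued alternating k-form A on V, ⟨σ̄(B₁, B₂), A⟩ = (−1)^{kt₂+1} ⟨B₁, A ∧^▷ B₂⟩ and ⟨A, σ̄(B₁, B₂)⟩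 = (−1)^{t₁t₂+1} ⟨A ∧^▷ B₂, B₁⟩, where ⟨,⟩ on forms denotes wedge along ⟨,⟩_g (when one argument is g-valued) or along ⟨,⟩_W (when both are W-valued). -/
open Equiv Finset

namespace Stmt11Aux

variable {a b : ℕ}

/-- Extend a pair of permutations blockwise to `Fin (a+b)`. -/
def extPerm (τ₁ : Equiv.Perm (Fin a)) (τ₂ : Equiv.Perm (Fin b)) : Equiv.Perm (Fin (a + b)) :=
  (finSumFinEquiv (m := a) (n := b)).permCongr (τ₁.sumCongr τ₂)

@[simp] lemma extPerm_castAdd (τ₁ : Perm (Fin a)) (τ₂ : Perm (Fin b)) (i : Fin a) :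
    extPerm τ₁ τ₂ (Fin.castAdd b i) = Fin.castAdd b (τ₁ i) := by
  simp [extPerm, Equiv.permCongr_apply, ← finSumFinEquiv_apply_left]

@[simp] lemma extPerm_natAdd (τ₁ : Perm (Fin a)) (τ₂ : Perm (Fin b)) (i : Fin b) :
    extPerm τ₁ τ₂ (Fin.natAdd a i) = Fin.natAdd a (τ₂ i) := by
  simp [extPerm, Equiv.permCongr_apply, ← finSumFinEquiv_apply_right]

@[simp] lemma sign_extPerm (τ₁ : Perm (Fin a)) (τ₂ : Perm (Fin b)) :
    Perm.sign (extPerm τ₁ τ₂) = Perm.sign τ₁ * Perm.sign τ₂ := by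
  simp [extPerm, Perm.sign_permCongr, Perm.sign_sumCongr]

lemma extPerm_mul (τ₁ τ₁' : Perm (Fin a)) (τ₂ τ₂' : Perm (Fin b)) :
    extPerm τ₁ τ₂ * extPerm τ₁' τ₂' = extPerm (τ₁ * τ₁') (τ₂ * τ₂') := by
  ext x
  refine Fin.addCases (fun i => ?_) (fun i => ?_) x <;> simp

@[simp] lemma extPerm_one : extPerm (1 : Perm (Fin a)) (1 : Perm (Fin b)) = 1 := by
  ext x
  refine Fin.addCases (fun i => ?_) (fun i => ?_) x <;> simp

@[simp] lemma extPerm_inv (τ₁ : Perm (Fin a)) (τ₂ : Perm (Fin b)) :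
    (extPerm τ₁ τ₂)⁻¹ = extPerm τ₁⁻¹ τ₂⁻¹ := by
  rw [inv_eq_iff_mul_eq_one, extPerm_mul]
  simp only [mul_inv_cancel]
  ext x
  refine Fin.addCases (fun i => ?_) (fun i => ?_) x <;> simp

end Stmt11Aux

namespace Stmt11Aux

open Fin.NatCast in
lemma finRotate_pow_apply (n m : ℕ) (x : Fin (n + 1)) :
    (finRotate (n + 1) ^ m) x = x + (m : Fin (n + 1)) := by
  induction m generalizing x with
  | zero => simp
  | succ m ih =>
      rw [pow_succ, Perm.mul_apply, finRotate_succ_apply, ih, Nat.cast_add, Nat.cast_one]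
      abel

open Fin.NatCast in
lemma finRotate_pow_val {n : ℕ} (m : ℕ) (x : Fin n) :
    ((finRotate n ^ m) x).val = (x.val + m) % n := by
  cases n with
  | zero => exact x.elim0
  | succ n =>
      rw [finRotate_pow_apply]
      simp [Fin.add_def, Nat.mod_add_mod]

lemma sign_finRotate_pow (n m : ℕ) :
    Perm.sign (finRotate n ^ m) = (-1 : ℤˣ) ^ ((n - 1) * m) := by
  cases n with
  | zero =>
      have : (finRotate 0 ^ m) = 1 := Subsingleton.elim _ _
      simp [this]
  | succ n =>
      rw [map_pow, sign_finRotate, ← pow_mul, Nat.succ_sub_one]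

end Stmt11Aux

namespace Stmt11Aux

lemma mem_shuffleSet {σ : Perm (Fin (a + b))} :
    σ ∈ shuffleSet a b ↔
      StrictMono (fun i : Fin a => σ (Fin.castAdd b i)) ∧
      StrictMono (fun i : Fin b => σ (Fin.natAdd a i)) := by
  simp only [shuffleSet, Finset.mem_filter, Finset.mem_univ, true_and]
  constructor
  · exact fun h => ⟨fun i j hij => h.1 i j hij, fun i j hij => h.2 i j hij⟩
  · exact fun h => ⟨fun i j hij => h.1 hij, fun i j hij => h.2 hij⟩

lemma castAdd_comp_injective (π : Perm (Fin (a + b))) :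
    Function.Injective fun i : Fin a => π (Fin.castAdd b i) := by
  intro i j h
  have := π.injective h
  exact Fin.ext (by simpa [Fin.ext_iff] using this)

lemma natAdd_comp_injective (π : Perm (Fin (a + b))) :
    Function.Injective fun i : Fin b => π (Fin.natAdd a i) := by
  intro i j h
  have := π.injective h
  simp only [Fin.ext_iff, Fin.coe_natAdd] at this ⊢
  omega

/-- The sorting permutation of the first block of `π`. -/
noncomputable def sort₁ (π : Perm (Fin (a + b))) : Perm (Fin a) :=
  Tuple.sort fun i => π (Fin.castAdd b i)

/-- The sorting permutation of the second block of `π`. -/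
noncomputable def sort₂ (π : Perm (Fin (a + b))) : Perm (Fin b) :=
  Tuple.sort fun i => π (Fin.natAdd a i)

lemma sort_comp_strictMono {c : ℕ} {N : ℕ} {g : Fin c → Fin N} (hg : StrictMono g)
    (τ : Perm (Fin c)) : Tuple.sort (g ∘ τ) = τ⁻¹ := by
  have hinj : Function.Injective (g ∘ τ) := hg.injective.comp τ.injective
  have h1 : Monotone ((g ∘ τ) ∘ (τ⁻¹ : Perm (Fin c))) := by
    have : (g ∘ τ) ∘ (τ⁻¹ : Perm (Fin c)) = g := by
      funext i; simp
    rw [this]; exact hg.monotone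
  have h2 : Monotone ((g ∘ τ) ∘ Tuple.sort (g ∘ τ)) := Tuple.monotone_sort _
  have := Tuple.unique_monotone h2 h1
  apply Equiv.ext
  intro i
  exact hinj (congrFun this i)

lemma shufflePart_mem (π : Perm (Fin (a + b))) :
    π * extPerm (sort₁ π) (sort₂ π) ∈ shuffleSet a b := by
  rw [mem_shuffleSet]
  constructor
  · have hmono : Monotone fun i : Fin a => π (Fin.castAdd b ((sort₁ π) i)) := by
      have := Tuple.monotone_sort fun i => π (Fin.castAdd b i)
      exact this
    have hinj : Function.Injective fun i : Fin a => π (Fin.castAdd b ((sort₁ π) i)) :=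
      (castAdd_comp_injective π).comp (sort₁ π).injective
    have := hmono.strictMono_of_injective hinj
    intro i j hij
    simpa using this hij
  · have hmono : Monotone fun i : Fin b => π (Fin.natAdd a ((sort₂ π) i)) := by
      have := Tuple.monotone_sort fun i => π (Fin.natAdd a i)
      exact this
    have hinj : Function.Injective fun i : Fin b => π (Fin.natAdd a ((sort₂ π) i)) :=
      (natAdd_comp_injective π).comp (sort₂ π).injective
    have := hmono.strictMono_of_injective hinj
    intro i j hij
    simpa using this hij

lemma sort₁_mul_ext {σ : Perm (Fin (a + b))} (hσ : σ ∈ shuffleSet a b)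
    (τ₁ : Perm (Fin a)) (τ₂ : Perm (Fin b)) :
    sort₁ (σ * extPerm τ₁ τ₂) = τ₁⁻¹ := by
  have hg : StrictMono fun i : Fin a => σ (Fin.castAdd b i) := (mem_shuffleSet.mp hσ).1
  have : (fun i : Fin a => (σ * extPerm τ₁ τ₂) (Fin.castAdd b i))
      = (fun i : Fin a => σ (Fin.castAdd b i)) ∘ τ₁ := by
    funext i; simp [Perm.mul_apply]
  rw [sort₁, this, sort_comp_strictMono hg]

lemma sort₂_mul_ext {σ : Perm (Fin (a + b))} (hσ : σ ∈ shuffleSet a b)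
    (τ₁ : Perm (Fin a)) (τ₂ : Perm (Fin b)) :
    sort₂ (σ * extPerm τ₁ τ₂) = τ₂⁻¹ := by
  have hg : StrictMono fun i : Fin b => σ (Fin.natAdd a i) := (mem_shuffleSet.mp hσ).2
  have : (fun i : Fin b => (σ * extPerm τ₁ τ₂) (Fin.natAdd a i))
      = (fun i : Fin b => σ (Fin.natAdd a i)) ∘ τ₂ := by
    funext i; simp [Perm.mul_apply]
  rw [sort₂, this, sort_comp_strictMono hg]

/-- Unique decomposition of a permutation into a shuffle and block permutations. -/
lemma sum_perm_decomp {M : Type*} [AddCommMonoid M] (G : Perm (Fin (a + b)) → M) :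
    ∑ π : Perm (Fin (a + b)), G π
      = ∑ x ∈ (shuffleSet a b) ×ˢ ((Finset.univ : Finset (Perm (Fin a))) ×ˢ Finset.univ),
          G (x.1 * extPerm x.2.1 x.2.2) := by
  refine Finset.sum_nbij'
    (i := fun π => (π * extPerm (sort₁ π) (sort₂ π), ((sort₁ π)⁻¹, (sort₂ π)⁻¹)))
    (j := fun x => x.1 * extPerm x.2.1 x.2.2) ?_ ?_ ?_ ?_ ?_
  · intro π _
    simp only [Finset.mem_product, Finset.mem_univ, and_true]
    exact shufflePart_mem π
  · intro x _; exact Finset.mem_univ _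
  · intro π _
    simp [mul_assoc, extPerm_mul]
  · intro x hx
    simp only [Finset.mem_product, Finset.mem_univ, and_true] at hx
    obtain ⟨σ, τ₁, τ₂⟩ := x
    simp only
    rw [sort₁_mul_ext hx, sort₂_mul_ext hx]
    simp [mul_assoc, extPerm_mul]
  · intro π _
    congr 1
    simp [mul_assoc, extPerm_mul]

end Stmt11Aux

namespace Stmt11Aux

lemma units_scalar (s1 s2 s3 : ℤˣ) :
    (((s1 * s2 * s3 : ℤˣ) : ℤ) * ((s2 : ℤ) * (s3 : ℤ))) = (s1 : ℤ) := by
  rcases Int.units_eq_one_or s1 with h1 | h1 <;>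
  rcases Int.units_eq_one_or s2 with h2 | h2 <;>
  rcases Int.units_eq_one_or s3 with h3 | h3 <;>
  simp [h1, h2, h3]

variable {V E F W : Type*} [AddCommGroup E] [Module ℝ E] [AddCommGroup F] [Module ℝ F]
    [AddCommGroup W] [Module ℝ W]

/-- Perm-sign equivariance property of a raw `k`-form. -/
def PermProp {c : ℕ} (ω : (Fin c → V) → E) : Prop :=
  ∀ (w : Fin c → V) (τ : Perm (Fin c)),
    ω (fun i => w (τ i)) = (Perm.sign τ : ℤ) • ω w

lemma full_eq_shuffle {a b : ℕ} (μ : E →ₗ[ℝ] F →ₗ[ℝ] W)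
    (ω : (Fin a → V) → E) (η : (Fin b → V) → F)
    (hω : PermProp ω) (hη : PermProp η) (v : Fin (a + b) → V) :
    ∑ π : Perm (Fin (a + b)), (Perm.sign π : ℤ) •
        μ (ω fun i => v (π (Fin.castAdd b i))) (η fun i => v (π (Fin.natAdd a i)))
      = (a.factorial * b.factorial) • wedgeRaw μ ω η v := by
  rw [sum_perm_decomp]
  rw [Finset.sum_product]
  have hterm : ∀ σ ∈ shuffleSet a b, ∀ y : Perm (Fin a) × Perm (Fin b),
      (Perm.sign (σ * extPerm y.1 y.2) : ℤ) •
        μ (ω fun i => v ((σ * extPerm y.1 y.2) (Fin.castAdd b i)))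
          (η fun i => v ((σ * extPerm y.1 y.2) (Fin.natAdd a i)))
      = (Perm.sign σ : ℤ) •
        μ (ω fun i => v (σ (Fin.castAdd b i))) (η fun i => v (σ (Fin.natAdd a i))) := by
    intro σ _ ⟨τ₁, τ₂⟩
    have e₁ : (fun i => v ((σ * extPerm τ₁ τ₂) (Fin.castAdd b i)))
        = fun i => v (σ (Fin.castAdd b (τ₁ i))) := by
      funext i; simp [Perm.mul_apply]
    have e₂ : (fun i => v ((σ * extPerm τ₁ τ₂) (Fin.natAdd a i)))
        = fun i => v (σ (Fin.natAdd a (τ₂ i))) := by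
      funext i; simp [Perm.mul_apply]
    have h1 : (ω fun i => v (σ (Fin.castAdd b (τ₁ i))))
        = (Perm.sign τ₁ : ℤ) • ω fun j => v (σ (Fin.castAdd b j)) := hω (fun j => v (σ (Fin.castAdd b j))) τ₁
    have h2 : (η fun i => v (σ (Fin.natAdd a (τ₂ i))))
        = (Perm.sign τ₂ : ℤ) • η fun j => v (σ (Fin.natAdd a j)) := hη (fun j => v (σ (Fin.natAdd a j))) τ₂
    rw [e₁, e₂, h1, h2, map_zsmul μ, LinearMap.smul_apply, map_zsmul]
    simp only [map_mul, sign_extPerm]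
    rcases Int.units_eq_one_or (Perm.sign σ) with h1' | h1' <;>
    rcases Int.units_eq_one_or (Perm.sign τ₁) with h2' | h2' <;>
    rcases Int.units_eq_one_or (Perm.sign τ₂) with h3' | h3' <;>
    simp [h1', h2', h3']
  calc ∑ σ ∈ shuffleSet a b, ∑ y ∈ (Finset.univ : Finset (Perm (Fin a))) ×ˢ Finset.univ,
        (Perm.sign (σ * extPerm y.1 y.2) : ℤ) •
          μ (ω fun i => v ((σ * extPerm y.1 y.2) (Fin.castAdd b i)))
            (η fun i => v ((σ * extPerm y.1 y.2) (Fin.natAdd a i)))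
      = ∑ σ ∈ shuffleSet a b, (a.factorial * b.factorial) •
          ((Perm.sign σ : ℤ) •
            μ (ω fun i => v (σ (Fin.castAdd b i))) (η fun i => v (σ (Fin.natAdd a i)))) := by
        refine Finset.sum_congr rfl fun σ hσ => ?_
        rw [Finset.sum_congr rfl fun y _ => hterm σ hσ y, Finset.sum_const]
        simp [Fintype.card_perm]
    _ = (a.factorial * b.factorial) • wedgeRaw μ ω η v := by
        rw [wedgeRaw, Finset.smul_sum]

end Stmt11Aux

namespace Stmt11Aux

variable {V E F W : Type*} [AddCommGroup E] [Module ℝ E] [AddCommGroup F] [Module ℝ F]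
    [AddCommGroup W] [Module ℝ W]

lemma nsmul_cancel {n : ℕ} (hn : n ≠ 0) {x y : W} (h : n • x = n • y) : x = y := by
  have h' : (n : ℝ) • x = (n : ℝ) • y := by
    rw [Nat.cast_smul_eq_nsmul, Nat.cast_smul_eq_nsmul]; exact h
  exact smul_right_injective W (Nat.cast_ne_zero.mpr hn) h'

lemma permProp_alt {c : ℕ} [AddCommGroup V] [Module ℝ V] (B : AlternatingMap ℝ V E (Fin c)) : PermProp (V := V) ⇑B := by
  intro w τ
  have := B.map_perm w τ
  simpa [Units.smul_def, Function.comp_def] using this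

/-- The sum over all permutations (rather than just shuffles). -/
def fullSum {a b : ℕ} (μ : E →ₗ[ℝ] F →ₗ[ℝ] W)
    (ω : (Fin a → V) → E) (η : (Fin b → V) → F) (v : Fin (a + b) → V) : W :=
  ∑ π : Perm (Fin (a + b)), (Perm.sign π : ℤ) •
    μ (ω fun i => v (π (Fin.castAdd b i))) (η fun i => v (π (Fin.natAdd a i)))

lemma fullSum_eq {a b : ℕ} (μ : E →ₗ[ℝ] F →ₗ[ℝ] W)
    (ω : (Fin a → V) → E) (η : (Fin b → V) → F)
    (hω : PermProp ω) (hη : PermProp η) (v : Fin (a + b) → V) :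
    fullSum μ ω η v = (a.factorial * b.factorial) • wedgeRaw μ ω η v :=
  full_eq_shuffle μ ω η hω hη v

lemma fullSum_comp_perm {a b : ℕ} (μ : E →ₗ[ℝ] F →ₗ[ℝ] W)
    (ω : (Fin a → V) → E) (η : (Fin b → V) → F) (w : Fin (a + b) → V)
    (τ : Perm (Fin (a + b))) :
    fullSum μ ω η (fun x => w (τ x)) = (Perm.sign τ : ℤ) • fullSum μ ω η w := by
  unfold fullSum
  rw [Finset.smul_sum]
  refine Fintype.sum_equiv (Equiv.mulLeft τ) _ _ fun π => ?_
  simp only [Equiv.coe_mulLeft, Perm.mul_apply, smul_smul, map_mul]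
  congr 1
  rcases Int.units_eq_one_or (Perm.sign τ) with h1 | h1 <;>
  rcases Int.units_eq_one_or (Perm.sign π) with h2 | h2 <;>
  simp [h1, h2]

lemma permProp_wedgeRaw {a b : ℕ} (μ : E →ₗ[ℝ] F →ₗ[ℝ] W)
    (ω : (Fin a → V) → E) (η : (Fin b → V) → F)
    (hω : PermProp ω) (hη : PermProp η) : PermProp (wedgeRaw μ ω η) := by
  intro w τ
  refine nsmul_cancel (n := a.factorial * b.factorial)
    (by positivity) ?_
  rw [← fullSum_eq μ ω η hω hη, fullSum_comp_perm μ ω η w τ,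
    fullSum_eq μ ω η hω hη, smul_comm]

end Stmt11Aux

namespace Stmt11Aux

variable {V E F X G' W : Type*} [AddCommGroup E] [Module ℝ E] [AddCommGroup F] [Module ℝ F]
    [AddCommGroup X] [Module ℝ X] [AddCommGroup G'] [Module ℝ G']
    [AddCommGroup W] [Module ℝ W]

lemma card_shuffleSet_mul (a b : ℕ) :
    (shuffleSet a b).card * (a.factorial * b.factorial) = (a + b).factorial := by
  have h := sum_perm_decomp (a := a) (b := b) (fun _ => (1 : ℕ))
  simp only [Finset.sum_const, smul_eq_mul, mul_one, Finset.card_univ, Fintype.card_perm,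
    Fintype.card_fin, Finset.card_product] at h
  exact h.symm

lemma fullSum_wedge_left {a b c : ℕ} (μ : X →ₗ[ℝ] G' →ₗ[ℝ] W) (ν : E →ₗ[ℝ] F →ₗ[ℝ] X)
    (ω : (Fin a → V) → E) (η : (Fin b → V) → F) (θ : (Fin c → V) → G')
    (v : Fin (a + b + c) → V) :
    fullSum μ (wedgeRaw ν ω η) θ v
      = (shuffleSet a b).card •
          ∑ π : Perm (Fin (a + b + c)), (Perm.sign π : ℤ) •
            μ (ν (ω fun i => v (π (Fin.castAdd c (Fin.castAdd b i))))
                 (η fun i => v (π (Fin.castAdd c (Fin.natAdd a i)))))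
              (θ fun i => v (π (Fin.natAdd (a + b) i))) := by
  unfold fullSum
  have step : ∀ σ : Perm (Fin (a + b + c)),
      (Perm.sign σ : ℤ) • μ (wedgeRaw ν ω η fun i => v (σ (Fin.castAdd c i)))
          (θ fun i => v (σ (Fin.natAdd (a + b) i)))
        = ∑ τ ∈ shuffleSet a b, (Perm.sign σ : ℤ) • (Perm.sign τ : ℤ) •
            μ (ν (ω fun i => v (σ (Fin.castAdd c (τ (Fin.castAdd b i)))))
                 (η fun i => v (σ (Fin.castAdd c (τ (Fin.natAdd a i))))))
              (θ fun i => v (σ (Fin.natAdd (a + b) i))) := by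
    intro σ
    simp only [wedgeRaw, map_sum, map_zsmul, LinearMap.sum_apply, LinearMap.smul_apply,
      Finset.smul_sum]
  rw [Finset.sum_congr rfl fun σ _ => step σ, Finset.sum_comm]
  rw [Finset.sum_congr rfl (g := fun τ : Perm (Fin (a + b)) =>
    ∑ π : Perm (Fin (a + b + c)), (Perm.sign π : ℤ) •
      μ (ν (ω fun i => v (π (Fin.castAdd c (Fin.castAdd b i))))
           (η fun i => v (π (Fin.castAdd c (Fin.natAdd a i)))))
        (θ fun i => v (π (Fin.natAdd (a + b) i)))) ?_, Finset.sum_const]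
  intro τ hτ
  refine Fintype.sum_equiv (Equiv.mulRight (extPerm τ (1 : Perm (Fin c)))) _ _ fun σ => ?_
  simp only [Equiv.coe_mulRight, Perm.mul_apply, extPerm_castAdd, extPerm_natAdd,
    Perm.one_apply, map_mul, sign_extPerm, map_one, mul_one, smul_smul]
  rw [Units.val_mul]

end Stmt11Aux

namespace Stmt11Aux

variable {V E F X G' W : Type*} [AddCommGroup E] [Module ℝ E] [AddCommGroup F] [Module ℝ F]
    [AddCommGroup X] [Module ℝ X] [AddCommGroup G'] [Module ℝ G']
    [AddCommGroup W] [Module ℝ W]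

lemma fullSum_wedge_right {a b c : ℕ} (μ : G' →ₗ[ℝ] X →ₗ[ℝ] W) (ν : E →ₗ[ℝ] F →ₗ[ℝ] X)
    (θ : (Fin c → V) → G') (ω : (Fin a → V) → E) (η : (Fin b → V) → F)
    (v : Fin (c + (a + b)) → V) :
    fullSum μ θ (wedgeRaw ν ω η) v
      = (shuffleSet a b).card •
          ∑ π : Perm (Fin (c + (a + b))), (Perm.sign π : ℤ) •
            μ (θ fun i => v (π (Fin.castAdd (a + b) i)))
              (ν (ω fun i => v (π (Fin.natAdd c (Fin.castAdd b i))))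
                 (η fun i => v (π (Fin.natAdd c (Fin.natAdd a i))))) := by
  unfold fullSum
  have step : ∀ σ : Perm (Fin (c + (a + b))),
      (Perm.sign σ : ℤ) • μ (θ fun i => v (σ (Fin.castAdd (a + b) i)))
          (wedgeRaw ν ω η fun i => v (σ (Fin.natAdd c i)))
        = ∑ τ ∈ shuffleSet a b, (Perm.sign σ : ℤ) • (Perm.sign τ : ℤ) •
            μ (θ fun i => v (σ (Fin.castAdd (a + b) i)))
              (ν (ω fun i => v (σ (Fin.natAdd c (τ (Fin.castAdd b i)))))
                 (η fun i => v (σ (Fin.natAdd c (τ (Fin.natAdd a i)))))) := by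
    intro σ
    simp only [wedgeRaw, map_sum, map_zsmul, Finset.smul_sum]
  rw [Finset.sum_congr rfl fun σ _ => step σ, Finset.sum_comm]
  rw [Finset.sum_congr rfl (g := fun τ : Perm (Fin (a + b)) =>
    ∑ π : Perm (Fin (c + (a + b))), (Perm.sign π : ℤ) •
      μ (θ fun i => v (π (Fin.castAdd (a + b) i)))
        (ν (ω fun i => v (π (Fin.natAdd c (Fin.castAdd b i))))
           (η fun i => v (π (Fin.natAdd c (Fin.natAdd a i)))))) ?_, Finset.sum_const]
  intro τ hτ
  refine Fintype.sum_equiv (Equiv.mulRight (extPerm (1 : Perm (Fin c)) τ)) _ _ fun σ => ?_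
  simp only [Equiv.coe_mulRight, Perm.mul_apply, extPerm_castAdd, extPerm_natAdd,
    Perm.one_apply, map_mul, sign_extPerm, map_one, one_mul, smul_smul]
  rw [Units.val_mul]

end Stmt11Aux

namespace Stmt11Aux

variable {V E F X G' W : Type*} [AddCommGroup E] [Module ℝ E] [AddCommGroup F] [Module ℝ F]
    [AddCommGroup X] [Module ℝ X] [AddCommGroup G'] [Module ℝ G']
    [AddCommGroup W] [Module ℝ W]

lemma card_shuffleSet_ne_zero (a b : ℕ) : (shuffleSet a b).card ≠ 0 := by
  refine Finset.card_ne_zero.mpr ⟨1, ?_⟩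
  rw [mem_shuffleSet]
  constructor
  · intro i j hij
    simp only [Perm.one_apply, Fin.lt_def, Fin.coe_castAdd]
    exact hij
  · intro i j hij
    simp only [Perm.one_apply, Fin.lt_def, Fin.coe_natAdd]
    exact Nat.add_lt_add_left hij a

lemma wedge_wedge_left {a b c : ℕ} (μ : X →ₗ[ℝ] G' →ₗ[ℝ] W) (ν : E →ₗ[ℝ] F →ₗ[ℝ] X)
    (ω : (Fin a → V) → E) (η : (Fin b → V) → F) (θ : (Fin c → V) → G')
    (hω : PermProp ω) (hη : PermProp η) (hθ : PermProp θ)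
    (v : Fin (a + b + c) → V) :
    (a.factorial * b.factorial * c.factorial) • wedgeRaw μ (wedgeRaw ν ω η) θ v
      = ∑ π : Perm (Fin (a + b + c)), (Perm.sign π : ℤ) •
          μ (ν (ω fun i => v (π (Fin.castAdd c (Fin.castAdd b i))))
               (η fun i => v (π (Fin.castAdd c (Fin.natAdd a i)))))
            (θ fun i => v (π (Fin.natAdd (a + b) i))) := by
  have h1 := fullSum_eq μ (wedgeRaw ν ω η) θ (permProp_wedgeRaw ν ω η hω hη) hθ v
  have h2 := fullSum_wedge_left μ ν ω η θ v
  refine nsmul_cancel (n := (shuffleSet a b).card) (card_shuffleSet_ne_zero a b) ?_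
  have hmul : (shuffleSet a b).card * (a.factorial * b.factorial * c.factorial)
      = (a + b).factorial * c.factorial := by
    rw [← card_shuffleSet_mul a b]; ring
  rw [← h2, h1, smul_smul, hmul]

lemma wedge_wedge_right {a b c : ℕ} (μ : G' →ₗ[ℝ] X →ₗ[ℝ] W) (ν : E →ₗ[ℝ] F →ₗ[ℝ] X)
    (θ : (Fin c → V) → G') (ω : (Fin a → V) → E) (η : (Fin b → V) → F)
    (hθ : PermProp θ) (hω : PermProp ω) (hη : PermProp η)
    (v : Fin (c + (a + b)) → V) :
    (c.factorial * (a.factorial * b.factorial)) • wedgeRaw μ θ (wedgeRaw ν ω η) v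
      = ∑ π : Perm (Fin (c + (a + b))), (Perm.sign π : ℤ) •
          μ (θ fun i => v (π (Fin.castAdd (a + b) i)))
            (ν (ω fun i => v (π (Fin.natAdd c (Fin.castAdd b i))))
               (η fun i => v (π (Fin.natAdd c (Fin.natAdd a i))))) := by
  have h1 := fullSum_eq μ θ (wedgeRaw ν ω η) hθ (permProp_wedgeRaw ν ω η hω hη) v
  have h2 := fullSum_wedge_right μ ν θ ω η v
  refine nsmul_cancel (n := (shuffleSet a b).card) (card_shuffleSet_ne_zero a b) ?_
  have hmul : (shuffleSet a b).card * (c.factorial * (a.factorial * b.factorial))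
      = c.factorial * (a + b).factorial := by
    rw [← card_shuffleSet_mul a b]; ring
  rw [← h2, h1, smul_smul, hmul]

end Stmt11Aux

namespace Stmt11Aux

lemma units_neg_one_pow_eq (c b : ℕ) :
    ((-1 : ℤˣ) ^ ((c + b - 1) * b)) = (-1 : ℤˣ) ^ (c * b) := by
  rcases Nat.even_or_odd b with hb | hb
  · rw [(hb.mul_left _).neg_one_pow, (hb.mul_left _).neg_one_pow]
  · have hb1 : 1 ≤ b := hb.pos
    rcases Nat.even_or_odd c with hc | hc
    · have h1 : Even (c + b - 1) := by
        obtain ⟨m, hm⟩ := hc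
        obtain ⟨n, hn⟩ := hb
        exact ⟨m + n, by omega⟩
      rw [(h1.mul_right _).neg_one_pow, (hc.mul_right _).neg_one_pow]
    · have h1 : Odd (c + b - 1) := by
        obtain ⟨m, hm⟩ := hc
        obtain ⟨n, hn⟩ := hb
        exact ⟨m + n, by omega⟩
      rw [(h1.mul hb).neg_one_pow, (hc.mul hb).neg_one_pow]

variable {a b c : ℕ}

/-- The permutation that fixes the first `a` coordinates and rotates the remaining
`c + b` coordinates by `b`. -/
noncomputable def swapPerm (a b c : ℕ) : Perm (Fin (a + (c + b))) :=
  extPerm (1 : Perm (Fin a)) (finRotate (c + b) ^ b)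

lemma sign_swapPerm : Perm.sign (swapPerm a b c) = (-1 : ℤˣ) ^ (c * b) := by
  rw [swapPerm, sign_extPerm, map_one, one_mul, sign_finRotate_pow, units_neg_one_pow_eq]

lemma swapPerm_block1 (h : a + (c + b) = a + b + c) (i : Fin a) :
    Fin.cast h (swapPerm a b c (Fin.castAdd (c + b) i)) = Fin.castAdd c (Fin.castAdd b i) := by
  apply Fin.ext
  simp [swapPerm, extPerm_castAdd]

lemma swapPerm_block2 (h : a + (c + b) = a + b + c) (j : Fin b) :
    Fin.cast h (swapPerm a b c (Fin.natAdd a (Fin.natAdd c j)))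
      = Fin.castAdd c (Fin.natAdd a j) := by
  apply Fin.ext
  simp only [swapPerm, extPerm_natAdd, Fin.coe_cast, Fin.coe_natAdd, Fin.coe_castAdd,
    finRotate_pow_val]
  have h1 : ((c + ↑j) + b) % (c + b) = ↑j % (c + b) := by
    rw [show (c + ↑j) + b = ↑j + (c + b) by ring, Nat.add_mod_right]
  have h2 : (j : ℕ) < c + b := by have := j.isLt; omega
  rw [h1, Nat.mod_eq_of_lt h2]

lemma swapPerm_block3 (h : a + (c + b) = a + b + c) (l : Fin c) :
    Fin.cast h (swapPerm a b c (Fin.natAdd a (Fin.castAdd b l)))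
      = Fin.natAdd (a + b) l := by
  apply Fin.ext
  simp only [swapPerm, extPerm_natAdd, Fin.coe_cast, Fin.coe_natAdd, Fin.coe_castAdd,
    finRotate_pow_val]
  have h2 : (l : ℕ) + b < c + b := by have := l.isLt; omega
  rw [Nat.mod_eq_of_lt h2]
  omega

/-- Swapping the last two blocks in a triple full sum. -/
lemma sum_swap_blocks {V M : Type*} [AddCommGroup M] [Module ℝ M]
    (T : (Fin a → V) → (Fin b → V) → (Fin c → V) → M)
    (h : a + (c + b) = a + b + c)
    (v : Fin (a + b + c) → V) :
    ∑ π : Perm (Fin (a + b + c)), (Perm.sign π : ℤ) •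
        T (fun i => v (π (Fin.castAdd c (Fin.castAdd b i))))
          (fun i => v (π (Fin.castAdd c (Fin.natAdd a i))))
          (fun i => v (π (Fin.natAdd (a + b) i)))
      = ((-1 : ℤ) ^ (b * c)) •
        ∑ π' : Perm (Fin (a + (c + b))), (Perm.sign π' : ℤ) •
          T (fun i => v (Fin.cast h (π' (Fin.castAdd (c + b) i))))
            (fun i => v (Fin.cast h (π' (Fin.natAdd a (Fin.natAdd c i)))))
            (fun i => v (Fin.cast h (π' (Fin.natAdd a (Fin.castAdd b i))))) := by
  rw [Finset.smul_sum]
  set e : Fin (a + (c + b)) ≃ Fin (a + b + c) := finCongr h with he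
  refine Fintype.sum_equiv ((Equiv.permCongr e.symm).trans
    (Equiv.mulRight (swapPerm a b c))) _ _ fun π => ?_
  have happ : ∀ x : Fin (a + (c + b)),
      ((Equiv.permCongr e.symm).trans (Equiv.mulRight (swapPerm a b c)) π) x
        = e.symm (π (Fin.cast h (swapPerm a b c x))) := by
    intro x
    simp [Equiv.permCongr_apply, e, Perm.mul_apply]
  have harg : ∀ x : Fin (a + (c + b)),
      v (Fin.cast h ((((Equiv.permCongr e.symm).trans
        (Equiv.mulRight (swapPerm a b c))) π) x))
        = v (π (Fin.cast h (swapPerm a b c x))) := by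
    intro x
    rw [happ]
    simp [e]
  simp only [harg]
  have hsign : Perm.sign (((Equiv.permCongr e.symm).trans
      (Equiv.mulRight (swapPerm a b c))) π) = Perm.sign π * (-1 : ℤˣ) ^ (c * b) := by
    show Perm.sign ((Equiv.permCongr e.symm) π * swapPerm a b c) = _
    rw [map_mul, Perm.sign_permCongr, sign_swapPerm]
  rw [hsign]
  have hblocks1 : ∀ i : Fin a, Fin.cast h (swapPerm a b c (Fin.castAdd (c + b) i))
      = Fin.castAdd c (Fin.castAdd b i) := swapPerm_block1 h
  have hblocks2 : ∀ j : Fin b, Fin.cast h (swapPerm a b c (Fin.natAdd a (Fin.natAdd c j)))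
      = Fin.castAdd c (Fin.natAdd a j) := swapPerm_block2 h
  have hblocks3 : ∀ l : Fin c, Fin.cast h (swapPerm a b c (Fin.natAdd a (Fin.castAdd b l)))
      = Fin.natAdd (a + b) l := swapPerm_block3 h
  simp only [hblocks1, hblocks2, hblocks3]
  rw [smul_smul, Units.val_mul, Units.val_pow_eq_pow_val]
  congr 1
  rw [mul_comm c b]
  have hcoe : ((-1 : ℤˣ) : ℤ) = -1 := rfl
  rw [hcoe]
  rcases Int.units_eq_one_or (Perm.sign π) with h1 | h1 <;> rw [h1] <;>
    rcases Nat.even_or_odd (b * c) with h2 | h2 <;>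
    simp [h2.neg_one_pow]

end Stmt11Aux

open Stmt11Aux

/-- with `▷ : g × W → W` bilinear, `⟨,⟩_g`, `⟨,⟩_W` symmetric bilinear
forms and `σ : W × W → g` bilinear with `⟨σ(Y,Y'), X⟩_g = −⟨Y, X ▷ Y'⟩_W`, setting
`σ̄(B₁,B₂) := B₁ ∧_σ B₂` for `W`-valued alternating forms `B₁, B₂` of degrees `t₁, t₂`,
every `g`-valued alternating `k`-form `A` satisfies
`⟨σ̄(B₁,B₂), A⟩ = (−1)^{kt₂+1} ⟨B₁, A ∧^▷ B₂⟩` and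
`⟨A, σ̄(B₁,B₂)⟩ = (−1)^{t₁t₂+1} ⟨A ∧^▷ B₂, B₁⟩`. -/
theorem stmt11 {V g W : Type*} [AddCommGroup V] [Module ℝ V] [AddCommGroup g] [Module ℝ g]
    [AddCommGroup W] [Module ℝ W]
    (ρ : g →ₗ[ℝ] W →ₗ[ℝ] W)
    (Bg : g →ₗ[ℝ] g →ₗ[ℝ] ℝ) (BW : W →ₗ[ℝ] W →ₗ[ℝ] ℝ)
    (hBgsymm : ∀ X X' : g, Bg X X' = Bg X' X)
    (hBWsymm : ∀ Y Y' : W, BW Y Y' = BW Y' Y)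
    (σm : W →ₗ[ℝ] W →ₗ[ℝ] g)
    (hσ : ∀ (X : g) (Y Y' : W), Bg (σm Y Y') X = - BW Y (ρ X Y'))
    {k t₁ t₂ : ℕ} (A : AlternatingMap ℝ V g (Fin k))
    (B₁ : AlternatingMap ℝ V W (Fin t₁)) (B₂ : AlternatingMap ℝ V W (Fin t₂)) :
    wedgeRaw Bg (wedgeRaw σm ⇑B₁ ⇑B₂) ⇑A
      = (-1 : ℝ) ^ (k * t₂ + 1) •
          castRaw (show t₁ + (k + t₂) = t₁ + t₂ + k by omega)
            (wedgeRaw BW ⇑B₁ (wedgeRaw ρ ⇑A ⇑B₂))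
    ∧ wedgeRaw Bg ⇑A (wedgeRaw σm ⇑B₁ ⇑B₂)
      = (-1 : ℝ) ^ (t₁ * t₂ + 1) •
          castRaw (show k + t₂ + t₁ = k + (t₁ + t₂) by omega)
            (wedgeRaw BW (wedgeRaw ρ ⇑A ⇑B₂) ⇑B₁) := by
  constructor
  · -- first identity
    funext v
    have h₁ : t₁ + (k + t₂) = t₁ + t₂ + k := by omega
    set v' : Fin (t₁ + (k + t₂)) → V := fun i => v (Fin.cast h₁ i) with hv'
    have hL := wedge_wedge_left Bg σm ⇑B₁ ⇑B₂ ⇑A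
      (permProp_alt B₁) (permProp_alt B₂) (permProp_alt A) v
    have hR := wedge_wedge_right BW ρ ⇑B₁ ⇑A ⇑B₂
      (permProp_alt B₁) (permProp_alt A) (permProp_alt B₂) v'
    have hswap := sum_swap_blocks (a := t₁) (b := t₂) (c := k)
      (T := fun x y z => Bg (σm (B₁ x) (B₂ y)) (A z)) h₁ v
    have hU : (∑ π' : Perm (Fin (t₁ + (k + t₂))), (Equiv.Perm.sign π' : ℤ) •
          Bg (σm (B₁ fun i => v (Fin.cast h₁ (π' (Fin.castAdd (k + t₂) i))))
                (B₂ fun i => v (Fin.cast h₁ (π' (Fin.natAdd t₁ (Fin.natAdd k i))))))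
            (A fun i => v (Fin.cast h₁ (π' (Fin.natAdd t₁ (Fin.castAdd t₂ i))))))
        = - ∑ π' : Perm (Fin (t₁ + (k + t₂))), (Equiv.Perm.sign π' : ℤ) •
          BW (B₁ fun i => v' (π' (Fin.castAdd (k + t₂) i)))
            (ρ (A fun i => v' (π' (Fin.natAdd t₁ (Fin.castAdd t₂ i))))
               (B₂ fun i => v' (π' (Fin.natAdd t₁ (Fin.natAdd k i))))) := by
      rw [← Finset.sum_neg_distrib]
      refine Finset.sum_congr rfl fun π' _ => ?_
      rw [hσ, smul_neg]
    have key : ((t₁.factorial * t₂.factorial * k.factorial) : ℕ) •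
          wedgeRaw Bg (wedgeRaw σm ⇑B₁ ⇑B₂) ⇑A v
        = ((-1 : ℤ) ^ (t₂ * k)) •
            (- ((t₁.factorial * (k.factorial * t₂.factorial) : ℕ) •
              wedgeRaw BW ⇑B₁ (wedgeRaw ρ ⇑A ⇑B₂) v')) :=
      hL.trans (hswap.trans (congrArg (fun t => ((-1 : ℤ) ^ (t₂ * k)) • t)
        (hU.trans (congrArg Neg.neg hR.symm))))
    have hNe : (((t₁.factorial * t₂.factorial * k.factorial : ℕ)) : ℝ) ≠ 0 :=
      Nat.cast_ne_zero.mpr (Nat.mul_ne_zero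
        (Nat.mul_ne_zero t₁.factorial_ne_zero t₂.factorial_ne_zero) k.factorial_ne_zero)
    have keyR : ((t₁.factorial * t₂.factorial * k.factorial : ℕ) : ℝ) *
          wedgeRaw Bg (wedgeRaw σm ⇑B₁ ⇑B₂) ⇑A v
        = ((t₁.factorial * t₂.factorial * k.factorial : ℕ) : ℝ) *
            ((-1 : ℝ) ^ (k * t₂ + 1) * wedgeRaw BW ⇑B₁ (wedgeRaw ρ ⇑A ⇑B₂) v') := by
      have hC : (-1 : ℝ) ^ (k * t₂ + 1) = -((-1 : ℝ) ^ (t₂ * k)) := by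
        rw [pow_succ, mul_comm t₂ k]; ring
      have h' := key
      simp only [nsmul_eq_mul, zsmul_eq_mul, smul_eq_mul] at h'
      push_cast at h'
      rw [hC]
      push_cast
      linear_combination h'
    have hfin := mul_left_cancel₀ hNe keyR
    simp only [Pi.smul_apply, castRaw, smul_eq_mul]
    exact hfin
  · -- second identity
    funext v
    have h₂ : k + t₂ + t₁ = k + (t₁ + t₂) := by omega
    have h₂' : k + (t₁ + t₂) = k + t₂ + t₁ := by omega
    set v₂' : Fin (k + t₂ + t₁) → V := fun i => v (Fin.cast h₂ i) with hv₂'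
    have hL2 := wedge_wedge_right Bg σm ⇑A ⇑B₁ ⇑B₂
      (permProp_alt A) (permProp_alt B₁) (permProp_alt B₂) v
    have hR2 := wedge_wedge_left BW ρ ⇑A ⇑B₂ ⇑B₁
      (permProp_alt A) (permProp_alt B₂) (permProp_alt B₁) v₂'
    have hswap2 := sum_swap_blocks (a := k) (b := t₂) (c := t₁)
      (T := fun x y z => BW (ρ (A x) (B₂ y)) (B₁ z)) h₂' v₂'
    have hsymm : ∀ (X : g) (Y Y' : W), Bg X (σm Y Y') = - BW (ρ X Y') Y := by
      intro X Y Y'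
      rw [hBgsymm, hσ, hBWsymm]
    have hU2 : (∑ π' : Perm (Fin (k + (t₁ + t₂))), (Equiv.Perm.sign π' : ℤ) •
          Bg (A fun i => v (π' (Fin.castAdd (t₁ + t₂) i)))
            (σm (B₁ fun i => v (π' (Fin.natAdd k (Fin.castAdd t₂ i))))
                (B₂ fun i => v (π' (Fin.natAdd k (Fin.natAdd t₁ i))))))
        = - ∑ π' : Perm (Fin (k + (t₁ + t₂))), (Equiv.Perm.sign π' : ℤ) •
          BW (ρ (A fun i => v₂' (Fin.cast h₂' (π' (Fin.castAdd (t₁ + t₂) i))))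
                (B₂ fun i => v₂' (Fin.cast h₂' (π' (Fin.natAdd k (Fin.natAdd t₁ i))))))
            (B₁ fun i => v₂' (Fin.cast h₂' (π' (Fin.natAdd k (Fin.castAdd t₂ i))))) := by
      rw [← Finset.sum_neg_distrib]
      refine Finset.sum_congr rfl fun π' _ => ?_
      rw [hsymm, smul_neg]
      rfl
    have key2 : ((k.factorial * (t₁.factorial * t₂.factorial)) : ℕ) •
          wedgeRaw Bg ⇑A (wedgeRaw σm ⇑B₁ ⇑B₂) v
        = - ∑ π' : Perm (Fin (k + (t₁ + t₂))), (Equiv.Perm.sign π' : ℤ) •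
          BW (ρ (A fun i => v₂' (Fin.cast h₂' (π' (Fin.castAdd (t₁ + t₂) i))))
                (B₂ fun i => v₂' (Fin.cast h₂' (π' (Fin.natAdd k (Fin.natAdd t₁ i))))))
            (B₁ fun i => v₂' (Fin.cast h₂' (π' (Fin.natAdd k (Fin.castAdd t₂ i))))) :=
      hL2.trans hU2
    have hRS : ((k.factorial * t₂.factorial * t₁.factorial) : ℕ) •
          wedgeRaw BW (wedgeRaw ρ ⇑A ⇑B₂) ⇑B₁ v₂'
        = ((-1 : ℤ) ^ (t₂ * t₁)) •
          ∑ π' : Perm (Fin (k + (t₁ + t₂))), (Equiv.Perm.sign π' : ℤ) •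
          BW (ρ (A fun i => v₂' (Fin.cast h₂' (π' (Fin.castAdd (t₁ + t₂) i))))
                (B₂ fun i => v₂' (Fin.cast h₂' (π' (Fin.natAdd k (Fin.natAdd t₁ i))))))
            (B₁ fun i => v₂' (Fin.cast h₂' (π' (Fin.natAdd k (Fin.castAdd t₂ i))))) :=
      hR2.trans hswap2
    have hNe2 : (((k.factorial * (t₁.factorial * t₂.factorial) : ℕ)) : ℝ) ≠ 0 :=
      Nat.cast_ne_zero.mpr (Nat.mul_ne_zero k.factorial_ne_zero
        (Nat.mul_ne_zero t₁.factorial_ne_zero t₂.factorial_ne_zero))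
    have keyR2 : ((k.factorial * (t₁.factorial * t₂.factorial) : ℕ) : ℝ) *
          wedgeRaw Bg ⇑A (wedgeRaw σm ⇑B₁ ⇑B₂) v
        = ((k.factorial * (t₁.factorial * t₂.factorial) : ℕ) : ℝ) *
            ((-1 : ℝ) ^ (t₁ * t₂ + 1) * wedgeRaw BW (wedgeRaw ρ ⇑A ⇑B₂) ⇑B₁ v₂') := by
      have hs : (-1 : ℝ) ^ (t₂ * t₁) * (-1 : ℝ) ^ (t₂ * t₁) = 1 := by
        rw [← pow_add]
        exact Even.neg_one_pow ⟨t₂ * t₁, by ring⟩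
      have hC2 : (-1 : ℝ) ^ (t₁ * t₂ + 1) = -((-1 : ℝ) ^ (t₂ * t₁)) := by
        rw [pow_succ, mul_comm t₁ t₂]; ring
      have e1 := key2
      have e3 := hRS
      simp only [nsmul_eq_mul, zsmul_eq_mul, smul_eq_mul] at e1 e3
      push_cast at e1 e3
      rw [hC2]
      push_cast
      linear_combination (((-1 : ℝ) ^ (t₂ * t₁)) * ((-1 : ℝ) ^ (t₂ * t₁))) * e1 +
        ((-1 : ℝ) ^ (t₂ * t₁)) * e3 -
        (((k.factorial : ℝ) * ((t₁.factorial : ℝ) * (t₂.factorial : ℝ))) *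
          wedgeRaw Bg ⇑A (wedgeRaw σm ⇑B₁ ⇑B₂) v) * hs
    have hfin2 := mul_left_cancel₀ hNe2 keyR2
    simp only [Pi.smul_apply, castRaw, smul_eq_mul]
    exact hfin2
end

section
/- Let g be a finite-dimensional real Lie algebra, h and l finite-dimensional real vector spaces, α̃ : h → g and β̃ : l → h linear maps, and ▷ : g × h → h a bilinear map satisfying α̃(X ▷ Y) = [X, α̃(Y)] for all X ∈ g, Y ∈ h. On an open set U ⊆ ℝ^d, let A be a smooth g-valued 1-form, B a smooth h-valued 2-form and C a smooth l-valued 3-form, and set F₁ := dA + ½ A ∧^{[,]} A − α̃ ∘ B and F₂ := dB + A ∧^▷ B − β̃ ∘ C. Then the first 3-Bianchi identity holds: dF₁ + A ∧^{[,]} F₁ = −α̃ ∘ (F₂ + β̃ ∘ C). -/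
/-! The exterior derivative of a smooth vector-valued differential form, given pointwise
by `(dω)_x(v₀,…,v_k) = Σ_{i=0}^{k} (−1)^i (Dω(x)·v_i)(v₀,…,v̂ᵢ,…,v_k)`, where `D` is the
Fréchet derivative and `v̂ᵢ` denotes omission of the `i`-th vector. A smooth `W`-valued
differential `k`-form on an open set `U ⊆ ℝ^d` is a map `ω` from `ℝ^d` to the space of
`W`-valued alternating `k`-forms on `ℝ^d` which is smooth on `U`, smoothness being
expressed by requiring every evaluation `x ↦ ω x v` to be `C^∞` on `U`. -/

/-- The exterior derivative, defined on the underlying functions of vector-valued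
differential forms via the Fréchet derivative. -/
noncomputable def extDerivRaw {X W : Type*} [NormedAddCommGroup X] [NormedSpace ℝ X]
    [NormedAddCommGroup W] [NormedSpace ℝ W] {k : ℕ}
    (ω : X → (Fin k → X) → W) (x : X) : (Fin (k + 1) → X) → W :=
  fun v => ∑ i : Fin (k + 1),
    (-1 : ℤ) ^ (i : ℕ) • fderiv ℝ (fun y => ω y (v ∘ i.succAbove)) x (v i)

/-- A form-valued map is smooth on `U` iff all its evaluations are. -/
def SmoothFormOn {X E : Type*} [NormedAddCommGroup X] [NormedSpace ℝ X]
    [NormedAddCommGroup E] [NormedSpace ℝ E] {k : ℕ}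
    (ω : X → AlternatingMap ℝ X E (Fin k)) (U : Set X) : Prop :=
  ∀ v : Fin k → X, ContDiffOn ℝ (⊤ : ℕ∞) (fun x => ω x v) U


section aux14

variable {V E F W : Type*} [AddCommGroup E] [Module ℝ E] [AddCommGroup F] [Module ℝ F]
    [AddCommGroup W] [Module ℝ W]

private lemma wedge11 (μ : E →ₗ[ℝ] F →ₗ[ℝ] W) (ω : (Fin 1 → V) → E) (η : (Fin 1 → V) → F)
    (v : Fin 2 → V) :
    wedgeRaw μ ω η v
      = μ (ω fun _ => v 0) (η fun _ => v 1) - μ (ω fun _ => v 1) (η fun _ => v 0) := by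
  have h : shuffleSet 1 1 = ({Equiv.refl (Fin 2), Equiv.swap 0 1} : Finset _) := by decide
  rw [wedgeRaw, h, Finset.sum_insert (by decide), Finset.sum_singleton]
  have key : ∀ (σ : Equiv.Perm (Fin 2)) (a b : Fin 2),
      σ (Fin.castAdd 1 0) = a → σ (Fin.natAdd 1 (0 : Fin 1)) = b →
      μ (ω fun i => v (σ (Fin.castAdd 1 i))) (η fun i => v (σ (Fin.natAdd 1 i)))
        = μ (ω fun _ => v a) (η fun _ => v b) := by
    intro σ a b ha hb
    have e1 : (fun i : Fin 1 => v (σ (Fin.castAdd 1 i))) = fun _ => v a := by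
      funext i; rw [Subsingleton.elim i 0, ha]
    have e2 : (fun i : Fin 1 => v (σ (Fin.natAdd 1 i))) = fun _ => v b := by
      funext i; rw [Subsingleton.elim i 0, hb]
    rw [e1, e2]
  rw [key (Equiv.refl (Fin 2)) 0 1 (by decide) (by decide),
      key (Equiv.swap 0 1) 1 0 (by decide) (by decide)]
  have s1 : (Equiv.Perm.sign (Equiv.refl (Fin 2)) : ℤ) = 1 := by decide
  have s2 : (Equiv.Perm.sign (Equiv.swap (0 : Fin 2) 1) : ℤ) = -1 := by decide
  rw [s1, s2]
  simp [sub_eq_add_neg]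

private lemma wedge12 (μ : E →ₗ[ℝ] F →ₗ[ℝ] W) (ω : (Fin 1 → V) → E) (η : (Fin 2 → V) → F)
    (v : Fin 3 → V) :
    wedgeRaw μ ω η v = μ (ω fun _ => v 0) (η ![v 1, v 2]) - μ (ω fun _ => v 1) (η ![v 0, v 2])
      + μ (ω fun _ => v 2) (η ![v 0, v 1]) := by
  have h : shuffleSet 1 2
      = ({Equiv.refl (Fin 3), Equiv.swap 0 1, Equiv.swap 1 2 * Equiv.swap 0 1} : Finset _) := by
    decide
  rw [wedgeRaw, h, Finset.sum_insert (by decide), Finset.sum_insert (by decide),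
      Finset.sum_singleton]
  have key : ∀ (σ : Equiv.Perm (Fin 3)) (a b c : Fin 3), σ (Fin.castAdd 2 0) = a →
      σ (Fin.natAdd 1 (0 : Fin 2)) = b → σ (Fin.natAdd 1 (1 : Fin 2)) = c →
      μ (ω fun i => v (σ (Fin.castAdd 2 i))) (η fun i => v (σ (Fin.natAdd 1 i)))
        = μ (ω fun _ => v a) (η ![v b, v c]) := by
    intro σ a b c ha hb hc
    have e1 : (fun i : Fin 1 => v (σ (Fin.castAdd 2 i))) = fun _ => v a := by
      funext i; rw [Subsingleton.elim i 0, ha]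
    have e2 : (fun i : Fin 2 => v (σ (Fin.natAdd 1 i))) = ![v b, v c] := by
      funext i
      match i with
      | 0 => rw [show σ (Fin.natAdd 1 (0 : Fin 2)) = b from hb]; rfl
      | 1 => rw [show σ (Fin.natAdd 1 (1 : Fin 2)) = c from hc]; rfl
    rw [e1, e2]
  rw [key (Equiv.refl (Fin 3)) 0 1 2 (by decide) (by decide) (by decide),
      key (Equiv.swap 0 1) 1 0 2 (by decide) (by decide) (by decide),
      key (Equiv.swap 1 2 * Equiv.swap 0 1) 2 0 1 (by decide) (by decide) (by decide)]
  have s1 : (Equiv.Perm.sign (Equiv.refl (Fin 3)) : ℤ) = 1 := by decide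
  have s2 : (Equiv.Perm.sign (Equiv.swap (0 : Fin 3) 1) : ℤ) = -1 := by decide
  have s3 : (Equiv.Perm.sign (Equiv.swap (1 : Fin 3) 2 * Equiv.swap 0 1) : ℤ) = 1 := by decide
  rw [s1, s2, s3]
  simp only [one_smul, neg_smul, neg_one_zsmul, sub_eq_add_neg, add_assoc]

variable {X W' : Type*} [NormedAddCommGroup X] [NormedSpace ℝ X]
    [NormedAddCommGroup W'] [NormedSpace ℝ W']

private lemma extDeriv1 (ω : X → (Fin 1 → X) → W') (x : X) (v : Fin 2 → X) :
    extDerivRaw ω x v = fderiv ℝ (fun y => ω y fun _ => v 1) x (v 0)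
      - fderiv ℝ (fun y => ω y fun _ => v 0) x (v 1) := by
  rw [extDerivRaw, Fin.sum_univ_two]
  have e0 : v ∘ Fin.succAbove 0 = fun _ : Fin 1 => v 1 := by
    funext i; rw [Subsingleton.elim i 0]; rfl
  have e1 : v ∘ Fin.succAbove 1 = fun _ : Fin 1 => v 0 := by
    funext i; rw [Subsingleton.elim i 0]; rfl
  rw [e0, e1]
  simp [sub_eq_add_neg]

private lemma extDeriv2 (ω : X → (Fin 2 → X) → W') (x : X) (v : Fin 3 → X) :
    extDerivRaw ω x v = fderiv ℝ (fun y => ω y ![v 1, v 2]) x (v 0)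
      - fderiv ℝ (fun y => ω y ![v 0, v 2]) x (v 1)
      + fderiv ℝ (fun y => ω y ![v 0, v 1]) x (v 2) := by
  rw [extDerivRaw, Fin.sum_univ_three]
  have e0 : v ∘ Fin.succAbove 0 = ![v 1, v 2] := by
    funext i; match i with | 0 => rfl | 1 => rfl
  have e1 : v ∘ Fin.succAbove 1 = ![v 0, v 2] := by
    funext i; match i with | 0 => rfl | 1 => rfl
  have e2 : v ∘ Fin.succAbove 2 = ![v 0, v 1] := by
    funext i; match i with | 0 => rfl | 1 => rfl
  rw [e0, e1, e2]
  simp [sub_eq_add_neg]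

end aux14

/-- A bilinear map out of finite-dimensional spaces, as a continuous bilinear map. -/
noncomputable def bilinCLM {E F W : Type*} [NormedAddCommGroup E] [NormedSpace ℝ E]
    [NormedAddCommGroup F] [NormedSpace ℝ F] [NormedAddCommGroup W] [NormedSpace ℝ W]
    [FiniteDimensional ℝ E] [FiniteDimensional ℝ F]
    (μ : E →ₗ[ℝ] F →ₗ[ℝ] W) : E →L[ℝ] F →L[ℝ] W :=
  LinearMap.toContinuousLinearMap
    { toFun := fun X => LinearMap.toContinuousLinearMap (μ X)
      map_add' := by intro a b; ext z; simp
      map_smul' := by intro c a; ext z; simp }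

@[simp] lemma bilinCLM_apply {E F W : Type*} [NormedAddCommGroup E] [NormedSpace ℝ E]
    [NormedAddCommGroup F] [NormedSpace ℝ F] [NormedAddCommGroup W] [NormedSpace ℝ W]
    [FiniteDimensional ℝ E] [FiniteDimensional ℝ F]
    (μ : E →ₗ[ℝ] F →ₗ[ℝ] W) (a : E) (b : F) : bilinCLM μ a b = μ a b := by
  simp [bilinCLM]

private lemma key14 {g h : Type*} [AddCommGroup g] [Module ℝ g] [AddCommGroup h] [Module ℝ h]
    (br : g →ₗ[ℝ] g →ₗ[ℝ] g)
    (br_alt : ∀ X : g, br X X = 0)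
    (br_jacobi : ∀ X Y Z : g, br X (br Y Z) = br (br X Y) Z + br Y (br X Z))
    (αt : h →ₗ[ℝ] g) (ρh : g →ₗ[ℝ] h →ₗ[ℝ] h)
    (hαρ : ∀ (X : g) (Y : h), αt (ρh X Y) = br X (αt Y))
    (a0 a1 a2 p01 p02 p10 p12 p20 p21 : g)
    (q201 q102 q210 q012 q120 q021 : g)
    (hq2 : q201 = q210) (hq1 : q102 = q120) (hq0 : q012 = q021)
    (b01 b02 b12 d0 d1 d2 : h) :
    (q201 - q102 + (2:ℝ)⁻¹ • (br a1 p20 + br p10 a2 - (br a2 p10 + br p20 a1)) - αt d0)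
    - (q210 - q012 + (2:ℝ)⁻¹ • (br a0 p21 + br p01 a2 - (br a2 p01 + br p21 a0)) - αt d1)
    + (q120 - q021 + (2:ℝ)⁻¹ • (br a0 p12 + br p02 a1 - (br a1 p02 + br p12 a0)) - αt d2)
    + (br a0 (p21 - p12 + (2:ℝ)⁻¹ • (br a1 a2 - br a2 a1) - αt b12)
      - br a1 (p20 - p02 + (2:ℝ)⁻¹ • (br a0 a2 - br a2 a0) - αt b02)
      + br a2 (p10 - p01 + (2:ℝ)⁻¹ • (br a0 a1 - br a1 a0) - αt b01))
    = -(αt (d0 - d1 + d2 + (ρh a0 b12 - ρh a1 b02 + ρh a2 b01))) := by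
  have anti : ∀ X Y : g, br X Y = - br Y X := by
    intro X Y
    have h0 := br_alt (X + Y)
    rw [map_add] at h0
    simp only [LinearMap.add_apply, map_add, br_alt X, br_alt Y] at h0
    rw [eq_neg_iff_add_eq_zero]
    rw [zero_add, add_zero, add_comm] at h0
    exact h0
  subst hq2 hq1 hq0
  simp only [map_add, map_sub, map_smul]
  rw [hαρ, hαρ, hαρ]
  rw [anti p10 a2, anti p20 a1, anti p01 a2, anti p21 a0, anti p02 a1, anti p12 a0,
      anti a2 a1, anti a2 a0, anti a1 a0]
  simp only [map_neg, map_add, map_sub, map_smul, smul_neg, smul_add, smul_sub]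
  rw [br_jacobi a0 a1 a2, anti (br a0 a1) a2]
  module

/-- let `g` be a finite-dimensional real Lie algebra (bracket `br`,
alternating and satisfying the Jacobi identity), `h`, `l` finite-dimensional real vector
spaces, `α̃ : h → g`, `β̃ : l → h` linear, and `▷ : g × h → h` bilinear with
`α̃(X ▷ Y) = [X, α̃(Y)]`. For a smooth `g`-valued 1-form `A`, a smooth `h`-valued 2-form
`B` and a smooth `l`-valued 3-form `C` on an open `U ⊆ ℝ^d`, with
`F₁ := dA + ½ A ∧^{[,]} A − α̃ ∘ B` and `F₂ := dB + A ∧^▷ B − β̃ ∘ C`, the first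
3-Bianchi identity `dF₁ + A ∧^{[,]} F₁ = −α̃ ∘ (F₂ + β̃ ∘ C)` holds on `U`. -/
theorem stmt14 {d : ℕ} {g h l : Type*}
    [NormedAddCommGroup g] [NormedSpace ℝ g] [FiniteDimensional ℝ g]
    [NormedAddCommGroup h] [NormedSpace ℝ h] [FiniteDimensional ℝ h]
    [NormedAddCommGroup l] [NormedSpace ℝ l] [FiniteDimensional ℝ l]
    (br : g →ₗ[ℝ] g →ₗ[ℝ] g)
    (br_alt : ∀ X : g, br X X = 0)
    (br_jacobi : ∀ X Y Z : g, br X (br Y Z) = br (br X Y) Z + br Y (br X Z))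
    (αt : h →ₗ[ℝ] g) (βt : l →ₗ[ℝ] h)
    (ρh : g →ₗ[ℝ] h →ₗ[ℝ] h)
    (hαρ : ∀ (X : g) (Y : h), αt (ρh X Y) = br X (αt Y))
    (U : Set (Fin d → ℝ)) (hU : IsOpen U)
    (A : (Fin d → ℝ) → AlternatingMap ℝ (Fin d → ℝ) g (Fin 1))
    (B : (Fin d → ℝ) → AlternatingMap ℝ (Fin d → ℝ) h (Fin 2))
    (C : (Fin d → ℝ) → AlternatingMap ℝ (Fin d → ℝ) l (Fin 3))
    (hA : SmoothFormOn A U) (hB : SmoothFormOn B U) (hC : SmoothFormOn C U)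
    (F₁ : (Fin d → ℝ) → (Fin 2 → (Fin d → ℝ)) → g)
    (hF₁ : ∀ y, F₁ y =
      extDerivRaw (fun z => ⇑(A z)) y + (2 : ℝ)⁻¹ • wedgeRaw br ⇑(A y) ⇑(A y)
        - (fun v => αt (B y v)))
    (F₂ : (Fin d → ℝ) → (Fin 3 → (Fin d → ℝ)) → h)
    (hF₂ : ∀ y, F₂ y =
      extDerivRaw (fun z => ⇑(B z)) y + wedgeRaw ρh ⇑(A y) ⇑(B y)
        - (fun v => βt (C y v))) :
    ∀ x ∈ U,
      extDerivRaw F₁ x + wedgeRaw br ⇑(A x) (F₁ x)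
        = -(fun v => αt (F₂ x v + βt (C x v))) := by
  intro x hx
  have hxU : U ∈ nhds x := hU.mem_nhds hx
  have hle1 : (1 : WithTop ℕ∞) ≤ ((⊤ : ℕ∞) : WithTop ℕ∞) := by exact_mod_cast le_top
  have hle2 : (2 : WithTop ℕ∞) ≤ ((⊤ : ℕ∞) : WithTop ℕ∞) := by
    calc (2 : WithTop ℕ∞) ≤ ((2:ℕ∞) : WithTop ℕ∞) := by norm_cast
    _ ≤ _ := WithTop.coe_le_coe.mpr le_top
  have hleS : ((⊤ : ℕ∞) : WithTop ℕ∞) + 1 ≤ ((⊤ : ℕ∞) : WithTop ℕ∞) := le_rfl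
  -- smoothness of evaluations of A
  have hfA : ∀ u : Fin d → ℝ, ContDiffOn ℝ (⊤ : ℕ∞) (fun y => A y fun _ => u) U :=
    fun u => hA fun _ => u
  have hfAat : ∀ u, ContDiffAt ℝ (⊤ : ℕ∞) (fun y => A y fun _ => u) x :=
    fun u => (hfA u).contDiffAt hxU
  have hPd : ∀ u, HasFDerivAt (fun y => A y fun _ => u)
      (fderiv ℝ (fun y => A y fun _ => u) x) x :=
    fun u => ((hfAat u).differentiableAt (by simp)).hasFDerivAt
  have hQd : ∀ u, HasFDerivAt (fderiv ℝ (fun y => A y fun _ => u))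
      (fderiv ℝ (fderiv ℝ (fun y => A y fun _ => u)) x) x := fun u =>
    (((((hfA u).fderiv_of_isOpen hU hleS).contDiffAt hxU)).differentiableAt (by simp)).hasFDerivAt
  have hQsym : ∀ u s t, fderiv ℝ (fderiv ℝ (fun y => A y fun _ => u)) x s t
      = fderiv ℝ (fderiv ℝ (fun y => A y fun _ => u)) x t s :=
    fun u s t => ((hfAat u).isSymmSndFDerivAt (by simpa [minSmoothness_of_isRCLikeNormedField] using hle2)) s t
  -- smoothness of evaluations of B
  have hDBd : ∀ w : Fin 2 → (Fin d → ℝ), HasFDerivAt (fun y => B y w)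
      (fderiv ℝ (fun y => B y w) x) x :=
    fun w => (((hB w).contDiffAt hxU).differentiableAt (by simp)).hasFDerivAt
  -- derivative of evaluations of F₁
  have hΦ : ∀ (w : Fin 2 → (Fin d → ℝ)) (s : Fin d → ℝ),
      fderiv ℝ (fun y => F₁ y w) x s
        = fderiv ℝ (fderiv ℝ (fun y => A y fun _ => w 1)) x s (w 0)
            - fderiv ℝ (fderiv ℝ (fun y => A y fun _ => w 0)) x s (w 1)
          + (2:ℝ)⁻¹ • (br (A x fun _ => w 0) (fderiv ℝ (fun y => A y fun _ => w 1) x s)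
              + br (fderiv ℝ (fun y => A y fun _ => w 0) x s) (A x fun _ => w 1)
              - (br (A x fun _ => w 1) (fderiv ℝ (fun y => A y fun _ => w 0) x s)
                + br (fderiv ℝ (fun y => A y fun _ => w 1) x s) (A x fun _ => w 0)))
          - αt (fderiv ℝ (fun y => B y w) x s) := by
    intro w s
    have hfun : (fun y => F₁ y w) = (fun y =>
        fderiv ℝ (fun z => A z fun _ => w 1) y (w 0)
          - fderiv ℝ (fun z => A z fun _ => w 0) y (w 1)
        + (2:ℝ)⁻¹ • (br (A y fun _ => w 0) (A y fun _ => w 1)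
            - br (A y fun _ => w 1) (A y fun _ => w 0))
        - αt (B y w)) := by
      funext y
      rw [hF₁ y]
      show extDerivRaw (fun z => ⇑(A z)) y w + (2:ℝ)⁻¹ • wedgeRaw br ⇑(A y) ⇑(A y) w
          - αt (B y w) = _
      rw [extDeriv1 (fun z => ⇑(A z)) y w, wedge11 br ⇑(A y) ⇑(A y) w]
    have hd : HasFDerivAt (fun y =>
        fderiv ℝ (fun z => A z fun _ => w 1) y (w 0)
          - fderiv ℝ (fun z => A z fun _ => w 0) y (w 1)
        + (2:ℝ)⁻¹ • (br (A y fun _ => w 0) (A y fun _ => w 1)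
            - br (A y fun _ => w 1) (A y fun _ => w 0))
        - αt (B y w))
        (((ContinuousLinearMap.apply ℝ g (w 0)).comp
              (fderiv ℝ (fderiv ℝ (fun y => A y fun _ => w 1)) x)
            - (ContinuousLinearMap.apply ℝ g (w 1)).comp
              (fderiv ℝ (fderiv ℝ (fun y => A y fun _ => w 0)) x))
          + (2:ℝ)⁻¹ • ((((bilinCLM br) (A x fun _ => w 0)).comp
                  (fderiv ℝ (fun y => A y fun _ => w 1) x)
                + ((bilinCLM br).comp (fderiv ℝ (fun y => A y fun _ => w 0) x)).flip
                  (A x fun _ => w 1))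
              - (((bilinCLM br) (A x fun _ => w 1)).comp
                  (fderiv ℝ (fun y => A y fun _ => w 0) x)
                + ((bilinCLM br).comp (fderiv ℝ (fun y => A y fun _ => w 1) x)).flip
                  (A x fun _ => w 0)))
          - (LinearMap.toContinuousLinearMap αt).comp (fderiv ℝ (fun y => B y w) x)) x := by
      have h1 : ∀ u t : Fin d → ℝ, HasFDerivAt
          (fun y => fderiv ℝ (fun z => A z fun _ => u) y t)
          ((ContinuousLinearMap.apply ℝ g t).comp
            (fderiv ℝ (fderiv ℝ (fun y => A y fun _ => u)) x)) x := fun u t =>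
        (ContinuousLinearMap.apply ℝ g t).hasFDerivAt.comp x (hQd u)
      have h2 : ∀ u u' : Fin d → ℝ, HasFDerivAt
          (fun y => br (A y fun _ => u) (A y fun _ => u'))
          (((bilinCLM br) (A x fun _ => u)).comp (fderiv ℝ (fun y => A y fun _ => u') x)
            + ((bilinCLM br).comp (fderiv ℝ (fun y => A y fun _ => u) x)).flip
              (A x fun _ => u')) x := by
        intro u u'
        have hc : HasFDerivAt (fun y => (bilinCLM br) (A y fun _ => u))
            ((bilinCLM br).comp (fderiv ℝ (fun y => A y fun _ => u) x)) x :=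
          (bilinCLM br).hasFDerivAt.comp x (hPd u)
        exact hc.clm_apply (hPd u')
      have h3 : HasFDerivAt (fun y => αt (B y w))
          ((LinearMap.toContinuousLinearMap αt).comp (fderiv ℝ (fun y => B y w) x)) x :=
        (LinearMap.toContinuousLinearMap αt).hasFDerivAt.comp x (hDBd w)
      exact (((h1 (w 1) (w 0)).sub (h1 (w 0) (w 1))).add
        (((h2 (w 0) (w 1)).sub (h2 (w 1) (w 0))).const_smul ((2:ℝ)⁻¹))).sub h3
    rw [hfun, hd.fderiv]
    simp only [ContinuousLinearMap.sub_apply, ContinuousLinearMap.add_apply,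
      ContinuousLinearMap.comp_apply, ContinuousLinearMap.coe_smul', Pi.smul_apply,
      ContinuousLinearMap.smul_apply, ContinuousLinearMap.flip_apply,
      ContinuousLinearMap.apply_apply, bilinCLM_apply, LinearMap.coe_toContinuousLinearMap']
  -- value of F₁ at x
  have hF₁x : ∀ w : Fin 2 → (Fin d → ℝ), F₁ x w
      = fderiv ℝ (fun z => A z fun _ => w 1) x (w 0)
          - fderiv ℝ (fun z => A z fun _ => w 0) x (w 1)
        + (2:ℝ)⁻¹ • (br (A x fun _ => w 0) (A x fun _ => w 1)
            - br (A x fun _ => w 1) (A x fun _ => w 0))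
        - αt (B x w) := by
    intro w
    rw [hF₁ x]
    show extDerivRaw (fun z => ⇑(A z)) x w + (2:ℝ)⁻¹ • wedgeRaw br ⇑(A x) ⇑(A x) w
        - αt (B x w) = _
    rw [extDeriv1 (fun z => ⇑(A z)) x w, wedge11 br ⇑(A x) ⇑(A x) w]
  -- right-hand side simplification
  funext v
  show extDerivRaw F₁ x v + wedgeRaw br ⇑(A x) (F₁ x) v
      = -(αt (F₂ x v + βt (C x v)))
  have eR : F₂ x v + βt (C x v)
      = extDerivRaw (fun z => ⇑(B z)) x v + wedgeRaw ρh ⇑(A x) ⇑(B x) v := by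
    rw [hF₂ x]
    show extDerivRaw (fun z => ⇑(B z)) x v + wedgeRaw ρh ⇑(A x) ⇑(B x) v - βt (C x v)
        + βt (C x v) = _
    rw [sub_add_cancel]
  rw [eR, extDeriv2 (fun z => ⇑(B z)) x v, wedge12 ρh ⇑(A x) ⇑(B x) v,
    extDeriv2 F₁ x v, wedge12 br ⇑(A x) (F₁ x) v,
    hΦ ![v 1, v 2] (v 0), hΦ ![v 0, v 2] (v 1), hΦ ![v 0, v 1] (v 2),
    hF₁x ![v 1, v 2], hF₁x ![v 0, v 2], hF₁x ![v 0, v 1]]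
  simp only [Matrix.cons_val_zero, Matrix.cons_val_one, Matrix.head_cons]
  exact key14 br br_alt br_jacobi αt ρh hαρ
    (A x fun _ => v 0) (A x fun _ => v 1) (A x fun _ => v 2)
    (fderiv ℝ (fun y => A y fun _ => v 0) x (v 1))
    (fderiv ℝ (fun y => A y fun _ => v 0) x (v 2))
    (fderiv ℝ (fun y => A y fun _ => v 1) x (v 0))
    (fderiv ℝ (fun y => A y fun _ => v 1) x (v 2))
    (fderiv ℝ (fun y => A y fun _ => v 2) x (v 0))
    (fderiv ℝ (fun y => A y fun _ => v 2) x (v 1))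
    (fderiv ℝ (fderiv ℝ (fun y => A y fun _ => v 2)) x (v 0) (v 1))
    (fderiv ℝ (fderiv ℝ (fun y => A y fun _ => v 1)) x (v 0) (v 2))
    (fderiv ℝ (fderiv ℝ (fun y => A y fun _ => v 2)) x (v 1) (v 0))
    (fderiv ℝ (fderiv ℝ (fun y => A y fun _ => v 0)) x (v 1) (v 2))
    (fderiv ℝ (fderiv ℝ (fun y => A y fun _ => v 1)) x (v 2) (v 0))
    (fderiv ℝ (fderiv ℝ (fun y => A y fun _ => v 0)) x (v 2) (v 1))
    (hQsym (v 2) (v 0) (v 1)) (hQsym (v 1) (v 0) (v 2)) (hQsym (v 0) (v 1) (v 2))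
    (B x ![v 0, v 1]) (B x ![v 0, v 2]) (B x ![v 1, v 2])
    (fderiv ℝ (fun y => B y ![v 1, v 2]) x (v 0))
    (fderiv ℝ (fun y => B y ![v 0, v 2]) x (v 1))
    (fderiv ℝ (fun y => B y ![v 0, v 1]) x (v 2))
end

section
/- Let g be a finite-dimensional real Lie algebra, h and l finite-dimensional real vector spaces, α̃ : h → g and β̃ : l → h linear maps, ▷ : g × h → h and ▷ : g × l → l bilinear maps such that ▷ on h is a Lie algebra action ([X, X'] ▷ Y = X ▷ (X' ▷ Y) − X' ▷ (X ▷ Y)) and β̃ is equivariant (β̃(X ▷ Z) = X ▷ β̃(Z) for X ∈ g, Z ∈ l), and {,} : h × h → l a bilinear map. On an open set U ⊆ ℝ^d, let A be a smooth g-valued 1-form, B a smooth h-valued 2-form and C a smooth l-valued 3-form, and set F₁ := dA + ½ A ∧^{[,]} A − α̃ ∘ B, F₂ := dB + A ∧^▷ B − β̃ ∘ C, and Ω₃ := dC + A ∧^▷ C + B ∧^{{,}} B. Then the second 3-Bianchi identity holds: dF₂ + A ∧^▷ F₂ = (F₁ + α̃ ∘ B) ∧^▷ B − β̃ ∘ (Ω₃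 − B ∧^{{,}} B). -/
section AuxAnalysis
variable {X W E F G : Type*} [NormedAddCommGroup X] [NormedSpace ℝ X]
  [NormedAddCommGroup W] [NormedSpace ℝ W]
  [NormedAddCommGroup E] [NormedSpace ℝ E]
  [NormedAddCommGroup F] [NormedSpace ℝ F]
  [NormedAddCommGroup G] [NormedSpace ℝ G]

lemma aux_cda_fderiv {f : X → W} {x : X} (hf : ContDiffAt ℝ (⊤ : ℕ∞) f x) :
    ContDiffAt ℝ (⊤ : ℕ∞) (fderiv ℝ f) x :=
  hf.fderiv_right (by exact_mod_cast le_refl _)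

lemma aux_diff_fderiv_apply {f : X → W} {x : X} (hf : ContDiffAt ℝ (⊤ : ℕ∞) f x) (u : X) :
    DifferentiableAt ℝ (fun y => fderiv ℝ f y u) x := by
  have h1 : DifferentiableAt ℝ (fderiv ℝ f) x :=
    (aux_cda_fderiv hf).differentiableAt (by simp)
  exact h1.clm_apply (differentiableAt_const u)

lemma aux_fderiv_fderiv {f : X → W} {x : X} (hf : ContDiffAt ℝ (⊤ : ℕ∞) f x) (u u' : X) :
    fderiv ℝ (fun y => fderiv ℝ f y u') x u = fderiv ℝ (fderiv ℝ f) x u u' := by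
  have h1 : DifferentiableAt ℝ (fderiv ℝ f) x :=
    (aux_cda_fderiv hf).differentiableAt (by simp)
  rw [fderiv_clm_apply h1 (differentiableAt_const u')]
  simp

lemma aux_fderiv_symm {f : X → W} {x : X} (hf : ContDiffAt ℝ (⊤ : ℕ∞) f x) (u u' : X) :
    fderiv ℝ (fun y => fderiv ℝ f y u') x u = fderiv ℝ (fun y => fderiv ℝ f y u) x u' := by
  rw [aux_fderiv_fderiv hf, aux_fderiv_fderiv hf]
  exact hf.isSymmSndFDerivAt (by rw [minSmoothness_of_isRCLikeNormedField]; exact WithTop.coe_le_coe.mpr (le_top : (2:ℕ∞) ≤ ⊤)) u u'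

lemma aux_diff_bilin (ρ : E →L[ℝ] F →L[ℝ] G) {f : X → E} {g : X → F} {x : X}
    (hf : DifferentiableAt ℝ f x) (hg : DifferentiableAt ℝ g x) :
    DifferentiableAt ℝ (fun y => ρ (f y) (g y)) x :=
  (ρ.differentiable.differentiableAt.comp x hf).clm_apply hg

lemma aux_fderiv_bilin (ρ : E →L[ℝ] F →L[ℝ] G) {f : X → E} {g : X → F} {x : X}
    (hf : DifferentiableAt ℝ f x) (hg : DifferentiableAt ℝ g x) (u : X) :
    fderiv ℝ (fun y => ρ (f y) (g y)) x u
      = ρ (fderiv ℝ f x u) (g x) + ρ (f x) (fderiv ℝ g x u) := by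
  have hc : DifferentiableAt ℝ (fun y => ρ (f y)) x :=
    ρ.differentiable.differentiableAt.comp x hf
  rw [fderiv_clm_apply hc hg]
  have hfc : fderiv ℝ (fun y => ρ (f y)) x = ρ.comp (fderiv ℝ f x) := by
    rw [show (fun y => ρ (f y)) = ⇑ρ ∘ f from rfl,
      fderiv_comp x ρ.differentiable.differentiableAt hf, ρ.fderiv]
  rw [hfc]
  simp [add_comm]

lemma aux_fderiv_post (T : W →L[ℝ] E) {f : X → W} {x : X}
    (hf : DifferentiableAt ℝ f x) (u : X) :
    fderiv ℝ (fun y => T (f y)) x u = T (fderiv ℝ f x u) := by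
  rw [show (fun y => T (f y)) = ⇑T ∘ f from rfl,
    fderiv_comp x T.differentiable.differentiableAt hf, T.fderiv]
  rfl

lemma aux_fderiv_comb7 {f1 f2 f3 f4 f5 f6 f7 : X → W} {x : X}
    (h1 : DifferentiableAt ℝ f1 x) (h2 : DifferentiableAt ℝ f2 x)
    (h3 : DifferentiableAt ℝ f3 x) (h4 : DifferentiableAt ℝ f4 x)
    (h5 : DifferentiableAt ℝ f5 x) (h6 : DifferentiableAt ℝ f6 x)
    (h7 : DifferentiableAt ℝ f7 x) (u : X) :
    fderiv ℝ (fun y => f1 y - f2 y + f3 y + (f4 y - f5 y + f6 y) - f7 y) x u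
      = fderiv ℝ f1 x u - fderiv ℝ f2 x u + fderiv ℝ f3 x u
        + (fderiv ℝ f4 x u - fderiv ℝ f5 x u + fderiv ℝ f6 x u) - fderiv ℝ f7 x u := by
  rw [fderiv_fun_sub ((((h1.fun_sub h2).fun_add h3).fun_add ((h4.fun_sub h5).fun_add h6))) h7,
    fderiv_fun_add (((h1.fun_sub h2).fun_add h3)) ((h4.fun_sub h5).fun_add h6),
    fderiv_fun_add (h1.fun_sub h2) h3, fderiv_fun_sub h1 h2,
    fderiv_fun_add (h4.fun_sub h5) h6, fderiv_fun_sub h4 h5]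
  rfl
end AuxAnalysis

namespace Stmt15Aux

def q0 : Equiv.Perm (Fin 2) := ⟨![0,1], ![0,1], by decide, by decide⟩
def q1 : Equiv.Perm (Fin 2) := ⟨![1,0], ![1,0], by decide, by decide⟩
def r0 : Equiv.Perm (Fin 3) := ⟨![0,1,2], ![0,1,2], by decide, by decide⟩
def r1 : Equiv.Perm (Fin 3) := ⟨![1,0,2], ![1,0,2], by decide, by decide⟩
def r2 : Equiv.Perm (Fin 3) := ⟨![2,0,1], ![1,2,0], by decide, by decide⟩
def s0 : Equiv.Perm (Fin 4) := ⟨![0,1,2,3], ![0,1,2,3], by decide, by decide⟩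
def s1 : Equiv.Perm (Fin 4) := ⟨![1,0,2,3], ![1,0,2,3], by decide, by decide⟩
def s2 : Equiv.Perm (Fin 4) := ⟨![2,0,1,3], ![1,2,0,3], by decide, by decide⟩
def s3 : Equiv.Perm (Fin 4) := ⟨![3,0,1,2], ![1,2,3,0], by decide, by decide⟩
def t01 : Equiv.Perm (Fin 4) := ⟨![0,1,2,3], ![0,1,2,3], by decide, by decide⟩
def t02 : Equiv.Perm (Fin 4) := ⟨![0,2,1,3], ![0,2,1,3], by decide, by decide⟩
def t03 : Equiv.Perm (Fin 4) := ⟨![0,3,1,2], ![0,2,3,1], by decide, by decide⟩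
def t12 : Equiv.Perm (Fin 4) := ⟨![1,2,0,3], ![2,0,1,3], by decide, by decide⟩
def t13 : Equiv.Perm (Fin 4) := ⟨![1,3,0,2], ![2,0,3,1], by decide, by decide⟩
def t23 : Equiv.Perm (Fin 4) := ⟨![2,3,0,1], ![2,3,0,1], by decide, by decide⟩

variable {V E F W : Type*} [AddCommGroup E] [Module ℝ E] [AddCommGroup F] [Module ℝ F]
  [AddCommGroup W] [Module ℝ W]

variable {V E F W : Type*} [AddCommGroup E] [Module ℝ E] [AddCommGroup F] [Module ℝ F]
  [AddCommGroup W] [Module ℝ W]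
  {X W' : Type*} [NormedAddCommGroup X] [NormedSpace ℝ X]
  [NormedAddCommGroup W'] [NormedSpace ℝ W']
lemma wedge11_eval (μ : E →ₗ[ℝ] F →ₗ[ℝ] W) (ω : (Fin 1 → V) → E) (η : (Fin 1 → V) → F)
    (v : Fin 2 → V) :
    wedgeRaw μ ω η v = μ (ω ![v 0]) (η ![v 1]) - μ (ω ![v 1]) (η ![v 0]) := by
  rw [wedgeRaw, show shuffleSet 1 1 = {q0, q1} from by decide,
    Finset.sum_insert (by decide), Finset.sum_singleton]
  rw [
    show (fun i : Fin 1 => v (q0 (Fin.castAdd 1 i))) = ![v 0] from by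
      funext i; fin_cases i <;> rfl,
    show (fun i : Fin 1 => v (q0 (Fin.natAdd 1 i))) = ![v 1] from by
      funext i; fin_cases i <;> rfl,
    show Equiv.Perm.sign q0 = 1 from by decide,
    show (fun i : Fin 1 => v (q1 (Fin.castAdd 1 i))) = ![v 1] from by
      funext i; fin_cases i <;> rfl,
    show (fun i : Fin 1 => v (q1 (Fin.natAdd 1 i))) = ![v 0] from by
      funext i; fin_cases i <;> rfl,
    show Equiv.Perm.sign q1 = -1 from by decide]
  simp only [Units.val_one, one_smul]
  module

lemma wedge12_eval (μ : E →ₗ[ℝ] F →ₗ[ℝ] W) (ω : (Fin 1 → V) → E) (η : (Fin 2 → V) → F)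
    (v : Fin 3 → V) :
    wedgeRaw μ ω η v = μ (ω ![v 0]) (η ![v 1, v 2]) - μ (ω ![v 1]) (η ![v 0, v 2]) + μ (ω ![v 2]) (η ![v 0, v 1]) := by
  rw [wedgeRaw, show shuffleSet 1 2 = {r0, r1, r2} from by decide,
    Finset.sum_insert (by decide), Finset.sum_insert (by decide), Finset.sum_singleton]
  rw [
    show (fun i : Fin 1 => v (r0 (Fin.castAdd 2 i))) = ![v 0] from by
      funext i; fin_cases i <;> rfl,
    show (fun i : Fin 2 => v (r0 (Fin.natAdd 1 i))) = ![v 1, v 2] from by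
      funext i; fin_cases i <;> rfl,
    show Equiv.Perm.sign r0 = 1 from by decide,
    show (fun i : Fin 1 => v (r1 (Fin.castAdd 2 i))) = ![v 1] from by
      funext i; fin_cases i <;> rfl,
    show (fun i : Fin 2 => v (r1 (Fin.natAdd 1 i))) = ![v 0, v 2] from by
      funext i; fin_cases i <;> rfl,
    show Equiv.Perm.sign r1 = -1 from by decide,
    show (fun i : Fin 1 => v (r2 (Fin.castAdd 2 i))) = ![v 2] from by
      funext i; fin_cases i <;> rfl,
    show (fun i : Fin 2 => v (r2 (Fin.natAdd 1 i))) = ![v 0, v 1] from by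
      funext i; fin_cases i <;> rfl,
    show Equiv.Perm.sign r2 = 1 from by decide]
  simp only [Units.val_one, one_smul]
  module

lemma wedge13_eval (μ : E →ₗ[ℝ] F →ₗ[ℝ] W) (ω : (Fin 1 → V) → E) (η : (Fin 3 → V) → F)
    (v : Fin 4 → V) :
    wedgeRaw μ ω η v = μ (ω ![v 0]) (η ![v 1, v 2, v 3]) - μ (ω ![v 1]) (η ![v 0, v 2, v 3]) + μ (ω ![v 2]) (η ![v 0, v 1, v 3]) - μ (ω ![v 3]) (η ![v 0, v 1, v 2]) := by
  rw [wedgeRaw, show shuffleSet 1 3 = {s0, s1, s2, s3} from by decide,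
    Finset.sum_insert (by decide), Finset.sum_insert (by decide), Finset.sum_insert (by decide), Finset.sum_singleton]
  rw [
    show (fun i : Fin 1 => v (s0 (Fin.castAdd 3 i))) = ![v 0] from by
      funext i; fin_cases i <;> rfl,
    show (fun i : Fin 3 => v (s0 (Fin.natAdd 1 i))) = ![v 1, v 2, v 3] from by
      funext i; fin_cases i <;> rfl,
    show Equiv.Perm.sign s0 = 1 from by decide,
    show (fun i : Fin 1 => v (s1 (Fin.castAdd 3 i))) = ![v 1] from by
      funext i; fin_cases i <;> rfl,
    show (fun i : Fin 3 => v (s1 (Fin.natAdd 1 i))) = ![v 0, v 2, v 3] from by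
      funext i; fin_cases i <;> rfl,
    show Equiv.Perm.sign s1 = -1 from by decide,
    show (fun i : Fin 1 => v (s2 (Fin.castAdd 3 i))) = ![v 2] from by
      funext i; fin_cases i <;> rfl,
    show (fun i : Fin 3 => v (s2 (Fin.natAdd 1 i))) = ![v 0, v 1, v 3] from by
      funext i; fin_cases i <;> rfl,
    show Equiv.Perm.sign s2 = 1 from by decide,
    show (fun i : Fin 1 => v (s3 (Fin.castAdd 3 i))) = ![v 3] from by
      funext i; fin_cases i <;> rfl,
    show (fun i : Fin 3 => v (s3 (Fin.natAdd 1 i))) = ![v 0, v 1, v 2] from by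
      funext i; fin_cases i <;> rfl,
    show Equiv.Perm.sign s3 = -1 from by decide]
  simp only [Units.val_one, one_smul]
  module

lemma wedge22_eval (μ : E →ₗ[ℝ] F →ₗ[ℝ] W) (ω : (Fin 2 → V) → E) (η : (Fin 2 → V) → F)
    (v : Fin 4 → V) :
    wedgeRaw μ ω η v = μ (ω ![v 0, v 1]) (η ![v 2, v 3]) - μ (ω ![v 0, v 2]) (η ![v 1, v 3]) + μ (ω ![v 0, v 3]) (η ![v 1, v 2]) + μ (ω ![v 1, v 2]) (η ![v 0, v 3]) - μ (ω ![v 1, v 3]) (η ![v 0, v 2]) + μ (ω ![v 2, v 3]) (η ![v 0, v 1]) := by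
  rw [wedgeRaw, show shuffleSet 2 2 = {t01, t02, t03, t12, t13, t23} from by decide,
    Finset.sum_insert (by decide), Finset.sum_insert (by decide), Finset.sum_insert (by decide), Finset.sum_insert (by decide), Finset.sum_insert (by decide), Finset.sum_singleton]
  rw [
    show (fun i : Fin 2 => v (t01 (Fin.castAdd 2 i))) = ![v 0, v 1] from by
      funext i; fin_cases i <;> rfl,
    show (fun i : Fin 2 => v (t01 (Fin.natAdd 2 i))) = ![v 2, v 3] from by
      funext i; fin_cases i <;> rfl,
    show Equiv.Perm.sign t01 = 1 from by decide,
    show (fun i : Fin 2 => v (t02 (Fin.castAdd 2 i))) = ![v 0, v 2] from by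
      funext i; fin_cases i <;> rfl,
    show (fun i : Fin 2 => v (t02 (Fin.natAdd 2 i))) = ![v 1, v 3] from by
      funext i; fin_cases i <;> rfl,
    show Equiv.Perm.sign t02 = -1 from by decide,
    show (fun i : Fin 2 => v (t03 (Fin.castAdd 2 i))) = ![v 0, v 3] from by
      funext i; fin_cases i <;> rfl,
    show (fun i : Fin 2 => v (t03 (Fin.natAdd 2 i))) = ![v 1, v 2] from by
      funext i; fin_cases i <;> rfl,
    show Equiv.Perm.sign t03 = 1 from by decide,
    show (fun i : Fin 2 => v (t12 (Fin.castAdd 2 i))) = ![v 1, v 2] from by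
      funext i; fin_cases i <;> rfl,
    show (fun i : Fin 2 => v (t12 (Fin.natAdd 2 i))) = ![v 0, v 3] from by
      funext i; fin_cases i <;> rfl,
    show Equiv.Perm.sign t12 = 1 from by decide,
    show (fun i : Fin 2 => v (t13 (Fin.castAdd 2 i))) = ![v 1, v 3] from by
      funext i; fin_cases i <;> rfl,
    show (fun i : Fin 2 => v (t13 (Fin.natAdd 2 i))) = ![v 0, v 2] from by
      funext i; fin_cases i <;> rfl,
    show Equiv.Perm.sign t13 = -1 from by decide,
    show (fun i : Fin 2 => v (t23 (Fin.castAdd 2 i))) = ![v 2, v 3] from by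
      funext i; fin_cases i <;> rfl,
    show (fun i : Fin 2 => v (t23 (Fin.natAdd 2 i))) = ![v 0, v 1] from by
      funext i; fin_cases i <;> rfl,
    show Equiv.Perm.sign t23 = 1 from by decide]
  simp only [Units.val_one, one_smul]
  module

lemma ext1_eval (ω : X → (Fin 1 → X) → W') (x : X) (v : Fin 2 → X) :
    extDerivRaw ω x v = fderiv ℝ (fun y => ω y ![v 1]) x (v 0) - fderiv ℝ (fun y => ω y ![v 0]) x (v 1) := by
  show (∑ i : Fin 2, (-1 : ℤ) ^ (i : ℕ) • fderiv ℝ (fun y => ω y (v ∘ i.succAbove)) x (v i)) = _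
  rw [Fin.sum_univ_two]
  rw [
    show v ∘ (0 : Fin 2).succAbove = ![v 1] from by
      funext j; fin_cases j <;> rfl,
    show v ∘ (1 : Fin 2).succAbove = ![v 0] from by
      funext j; fin_cases j <;> rfl]
  norm_num
  module

lemma ext2_eval (ω : X → (Fin 2 → X) → W') (x : X) (v : Fin 3 → X) :
    extDerivRaw ω x v = fderiv ℝ (fun y => ω y ![v 1, v 2]) x (v 0) - fderiv ℝ (fun y => ω y ![v 0, v 2]) x (v 1) + fderiv ℝ (fun y => ω y ![v 0, v 1]) x (v 2) := by
  show (∑ i : Fin 3, (-1 : ℤ) ^ (i : ℕ) • fderiv ℝ (fun y => ω y (v ∘ i.succAbove)) x (v i)) = _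
  rw [Fin.sum_univ_three]
  rw [
    show v ∘ (0 : Fin 3).succAbove = ![v 1, v 2] from by
      funext j; fin_cases j <;> rfl,
    show v ∘ (1 : Fin 3).succAbove = ![v 0, v 2] from by
      funext j; fin_cases j <;> rfl,
    show v ∘ (2 : Fin 3).succAbove = ![v 0, v 1] from by
      funext j; fin_cases j <;> rfl]
  norm_num
  module

lemma ext3_eval (ω : X → (Fin 3 → X) → W') (x : X) (v : Fin 4 → X) :
    extDerivRaw ω x v = fderiv ℝ (fun y => ω y ![v 1, v 2, v 3]) x (v 0) - fderiv ℝ (fun y => ω y ![v 0, v 2, v 3]) x (v 1) + fderiv ℝ (fun y => ω y ![v 0, v 1, v 3]) x (v 2) - fderiv ℝ (fun y => ω y ![v 0, v 1, v 2]) x (v 3) := by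
  show (∑ i : Fin 4, (-1 : ℤ) ^ (i : ℕ) • fderiv ℝ (fun y => ω y (v ∘ i.succAbove)) x (v i)) = _
  rw [Fin.sum_univ_four]
  rw [
    show v ∘ (0 : Fin 4).succAbove = ![v 1, v 2, v 3] from by
      funext j; fin_cases j <;> rfl,
    show v ∘ (1 : Fin 4).succAbove = ![v 0, v 2, v 3] from by
      funext j; fin_cases j <;> rfl,
    show v ∘ (2 : Fin 4).succAbove = ![v 0, v 1, v 3] from by
      funext j; fin_cases j <;> rfl,
    show v ∘ (3 : Fin 4).succAbove = ![v 0, v 1, v 2] from by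
      funext j; fin_cases j <;> rfl]
  norm_num [show ((3:Fin 4):ℕ) = 3 from rfl]
  module

end Stmt15Aux

set_option maxHeartbeats 4000000

/-- let `g` be a finite-dimensional real Lie algebra (bracket `br`,
alternating and Jacobi), `h`, `l` finite-dimensional real vector spaces, `α̃ : h → g`,
`β̃ : l → h` linear, `▷ : g × h → h` a bilinear Lie algebra action, `▷ : g × l → l`
bilinear with `β̃` equivariant (`β̃(X ▷ Z) = X ▷ β̃(Z)`), and `{,} : h × h → l` bilinear.
For a smooth `g`-valued 1-form `A`, a smooth `h`-valued 2-form `B` and a smooth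
`l`-valued 3-form `C` on an open `U ⊆ ℝ^d`, with `F₁ := dA + ½ A ∧^{[,]} A − α̃ ∘ B`,
`F₂ := dB + A ∧^▷ B − β̃ ∘ C` and `Ω₃ := dC + A ∧^▷ C + B ∧^{{,}} B`, the second
3-Bianchi identity `dF₂ + A ∧^▷ F₂ = (F₁ + α̃ ∘ B) ∧^▷ B − β̃ ∘ (Ω₃ − B ∧^{{,}} B)`
holds on `U`. -/



theorem stmt15 {d : ℕ} {g h l : Type*}
    [NormedAddCommGroup g] [NormedSpace ℝ g] [FiniteDimensional ℝ g]
    [NormedAddCommGroup h] [NormedSpace ℝ h] [FiniteDimensional ℝ h]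
    [NormedAddCommGroup l] [NormedSpace ℝ l] [FiniteDimensional ℝ l]
    (br : g →ₗ[ℝ] g →ₗ[ℝ] g)
    (br_alt : ∀ X : g, br X X = 0)
    (br_jacobi : ∀ X Y Z : g, br X (br Y Z) = br (br X Y) Z + br Y (br X Z))
    (αt : h →ₗ[ℝ] g) (βt : l →ₗ[ℝ] h)
    (ρh : g →ₗ[ℝ] h →ₗ[ℝ] h) (ρl : g →ₗ[ℝ] l →ₗ[ℝ] l)
    (hρh_action : ∀ (X X' : g) (Y : h),
      ρh (br X X') Y = ρh X (ρh X' Y) - ρh X' (ρh X Y))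
    (hβρ : ∀ (X : g) (Z : l), βt (ρl X Z) = ρh X (βt Z))
    (pf : h →ₗ[ℝ] h →ₗ[ℝ] l)
    (U : Set (Fin d → ℝ)) (hU : IsOpen U)
    (A : (Fin d → ℝ) → AlternatingMap ℝ (Fin d → ℝ) g (Fin 1))
    (B : (Fin d → ℝ) → AlternatingMap ℝ (Fin d → ℝ) h (Fin 2))
    (C : (Fin d → ℝ) → AlternatingMap ℝ (Fin d → ℝ) l (Fin 3))
    (hA : SmoothFormOn A U) (hB : SmoothFormOn B U) (hC : SmoothFormOn C U)
    (F₁ : (Fin d → ℝ) → (Fin 2 → (Fin d → ℝ)) → g)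
    (hF₁ : ∀ y, F₁ y =
      extDerivRaw (fun z => ⇑(A z)) y + (2 : ℝ)⁻¹ • wedgeRaw br ⇑(A y) ⇑(A y)
        - (fun v => αt (B y v)))
    (F₂ : (Fin d → ℝ) → (Fin 3 → (Fin d → ℝ)) → h)
    (hF₂ : ∀ y, F₂ y =
      extDerivRaw (fun z => ⇑(B z)) y + wedgeRaw ρh ⇑(A y) ⇑(B y)
        - (fun v => βt (C y v)))
    (Ω₃ : (Fin d → ℝ) → (Fin 4 → (Fin d → ℝ)) → l)
    (hΩ₃ : ∀ y, Ω₃ y =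
      extDerivRaw (fun z => ⇑(C z)) y + wedgeRaw ρl ⇑(A y) ⇑(C y)
        + wedgeRaw pf ⇑(B y) ⇑(B y)) :
    ∀ x ∈ U,
      extDerivRaw F₂ x + wedgeRaw ρh ⇑(A x) (F₂ x)
        = wedgeRaw ρh (fun v => F₁ x v + αt (B x v)) ⇑(B x)
          - (fun v => βt ((Ω₃ x - wedgeRaw pf ⇑(B x) ⇑(B x)) v)) := by
  classical
  intro x hx
  have hmem : U ∈ nhds x := hU.mem_nhds hx
  -- smoothness of evaluations at x
  have hAx : ∀ w, ContDiffAt ℝ (⊤ : ℕ∞) (fun y => A y w) x := fun w => (hA w).contDiffAt hmem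
  have hBx : ∀ w, ContDiffAt ℝ (⊤ : ℕ∞) (fun y => B y w) x := fun w => (hB w).contDiffAt hmem
  have hCx : ∀ w, ContDiffAt ℝ (⊤ : ℕ∞) (fun y => C y w) x := fun w => (hC w).contDiffAt hmem
  have hAd : ∀ w, DifferentiableAt ℝ (fun y => A y w) x :=
    fun w => (hAx w).differentiableAt (by simp)
  have hBd : ∀ w, DifferentiableAt ℝ (fun y => B y w) x :=
    fun w => (hBx w).differentiableAt (by simp)
  have hCd : ∀ w, DifferentiableAt ℝ (fun y => C y w) x :=
    fun w => (hCx w).differentiableAt (by simp)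
  -- continuous linear versions
  set βtc : l →L[ℝ] h := LinearMap.toContinuousLinearMap βt with hβtcdef
  have hβtc : ∀ z, βtc z = βt z := fun z => rfl
  set ρc : g →L[ℝ] h →L[ℝ] h := LinearMap.toContinuousLinearMap
    (((LinearMap.toContinuousLinearMap :
        (h →ₗ[ℝ] h) ≃ₗ[ℝ] (h →L[ℝ] h)) : (h →ₗ[ℝ] h) →ₗ[ℝ] (h →L[ℝ] h)).comp ρh) with hρcdef
  have hρc : ∀ X Y, ρc X Y = ρh X Y := fun X Y => rfl
  -- bracket antisymmetry
  have hbr : ∀ X Y : g, br X Y = -br Y X := by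
    intro X Y
    have h0 := br_alt (X + Y)
    simp only [map_add, LinearMap.add_apply, br_alt, zero_add, add_zero] at h0
    exact eq_neg_of_add_eq_zero_left (by linear_combination (norm := abel) h0)
  -- differentiability of composite evaluations
  have hβC_diff : ∀ (w : Fin 3 → (Fin d → ℝ)),
      DifferentiableAt ℝ (fun y => βt (C y w)) x := by
    intro w
    have h1 : DifferentiableAt ℝ (fun y => βtc (C y w)) x :=
      (differentiableAt_const βtc).clm_apply (hCd w)
    simpa only [hβtc] using h1
  have hβC_fd : ∀ (w : Fin 3 → (Fin d → ℝ)) (u : Fin d → ℝ),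
      fderiv ℝ (fun y => βt (C y w)) x u = βt (fderiv ℝ (fun y => C y w) x u) := by
    intro w u
    rw [show (fun y => βt (C y w)) = (fun y => βtc (C y w)) from
      funext fun y => (hβtc _).symm]
    rw [aux_fderiv_post βtc (hCd w) u, hβtc]
  have hAB_diff : ∀ (a : Fin 1 → (Fin d → ℝ)) (b : Fin 2 → (Fin d → ℝ)),
      DifferentiableAt ℝ (fun y => ρh (A y a) (B y b)) x := by
    intro a b
    have h1 := aux_diff_bilin ρc (hAd a) (hBd b)
    simpa only [hρc] using h1
  have hAB_fd : ∀ (a : Fin 1 → (Fin d → ℝ)) (b : Fin 2 → (Fin d → ℝ)) (u : Fin d → ℝ),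
      fderiv ℝ (fun y => ρh (A y a) (B y b)) x u
        = ρh (fderiv ℝ (fun y => A y a) x u) (B x b)
          + ρh (A x a) (fderiv ℝ (fun y => B y b) x u) := by
    intro a b u
    rw [show (fun y => ρh (A y a) (B y b)) = (fun y => ρc (A y a) (B y b)) from
      funext fun y => (hρc _ _).symm]
    rw [aux_fderiv_bilin ρc (hAd a) (hBd b) u, hρc, hρc]
  have hdB_diff : ∀ (b : Fin 2 → (Fin d → ℝ)) (u : Fin d → ℝ),
      DifferentiableAt ℝ (fun y => fderiv ℝ (fun z => B z b) y u) x :=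
    fun b u => aux_diff_fderiv_apply (hBx b) u
  have hBdd : ∀ (b : Fin 2 → (Fin d → ℝ)) (u u' : Fin d → ℝ),
      fderiv ℝ (fun y => fderiv ℝ (fun z => B z b) y u') x u
        = fderiv ℝ (fderiv ℝ (fun z => B z b)) x u u' :=
    fun b u u' => aux_fderiv_fderiv (hBx b) u u'
  have hBsym : ∀ (b : Fin 2 → (Fin d → ℝ)) (u u' : Fin d → ℝ),
      fderiv ℝ (fderiv ℝ (fun z => B z b)) x u u'
        = fderiv ℝ (fderiv ℝ (fun z => B z b)) x u' u := by
    intro b u u'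
    rw [← aux_fderiv_fderiv (hBx b) u u', aux_fderiv_symm (hBx b) u u',
      aux_fderiv_fderiv (hBx b) u' u]
  -- derivative of evaluations of F₂
  have hdF₂ : ∀ (w : Fin 3 → (Fin d → ℝ)) (u : Fin d → ℝ),
      fderiv ℝ (fun y => F₂ y w) x u =
        fderiv ℝ (fderiv ℝ (fun z => B z ![w 1, w 2])) x u (w 0)
        - fderiv ℝ (fderiv ℝ (fun z => B z ![w 0, w 2])) x u (w 1)
        + fderiv ℝ (fderiv ℝ (fun z => B z ![w 0, w 1])) x u (w 2)
        + ((ρh (fderiv ℝ (fun y => A y ![w 0]) x u) (B x ![w 1, w 2])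
            + ρh (A x ![w 0]) (fderiv ℝ (fun y => B y ![w 1, w 2]) x u))
          - (ρh (fderiv ℝ (fun y => A y ![w 1]) x u) (B x ![w 0, w 2])
            + ρh (A x ![w 1]) (fderiv ℝ (fun y => B y ![w 0, w 2]) x u))
          + (ρh (fderiv ℝ (fun y => A y ![w 2]) x u) (B x ![w 0, w 1])
            + ρh (A x ![w 2]) (fderiv ℝ (fun y => B y ![w 0, w 1]) x u)))
        - βt (fderiv ℝ (fun y => C y w) x u) := by
    intro w u
    have e : (fun y => F₂ y w)
        = fun y =>
          fderiv ℝ (fun z => B z ![w 1, w 2]) y (w 0)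
          - fderiv ℝ (fun z => B z ![w 0, w 2]) y (w 1)
          + fderiv ℝ (fun z => B z ![w 0, w 1]) y (w 2)
          + (ρh (A y ![w 0]) (B y ![w 1, w 2])
             - ρh (A y ![w 1]) (B y ![w 0, w 2])
             + ρh (A y ![w 2]) (B y ![w 0, w 1]))
          - βt (C y w) := by
      funext y
      rw [hF₂ y]
      simp only [Pi.add_apply, Pi.sub_apply]
      rw [Stmt15Aux.ext2_eval, Stmt15Aux.wedge12_eval]
    rw [e, aux_fderiv_comb7 (hdB_diff ![w 1, w 2] (w 0)) (hdB_diff ![w 0, w 2] (w 1))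
        (hdB_diff ![w 0, w 1] (w 2)) (hAB_diff ![w 0] ![w 1, w 2])
        (hAB_diff ![w 1] ![w 0, w 2]) (hAB_diff ![w 2] ![w 0, w 1]) (hβC_diff w) u]
    rw [hBdd, hBdd, hBdd, hAB_fd, hAB_fd, hAB_fd, hβC_fd]
  funext v
  simp only [Pi.add_apply, Pi.sub_apply, Stmt15Aux.ext3_eval, Stmt15Aux.wedge13_eval,
    Stmt15Aux.wedge22_eval]
  simp only [hdF₂]
  simp only [Matrix.cons_val_zero, Matrix.cons_val_one, Matrix.head_cons,
    Matrix.cons_val_two, Matrix.tail_cons, Matrix.cons_val_three]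
  simp only [hF₁, hF₂, hΩ₃, Pi.add_apply, Pi.sub_apply, Pi.smul_apply,
    Stmt15Aux.ext1_eval, Stmt15Aux.ext2_eval, Stmt15Aux.ext3_eval,
    Stmt15Aux.wedge11_eval, Stmt15Aux.wedge12_eval, Stmt15Aux.wedge13_eval,
    Stmt15Aux.wedge22_eval]
  simp only [Matrix.cons_val_zero, Matrix.cons_val_one, Matrix.head_cons,
    Matrix.cons_val_two, Matrix.tail_cons, Matrix.cons_val_three]
  simp only [map_add, map_sub, map_smul, LinearMap.add_apply, LinearMap.sub_apply,
    LinearMap.smul_apply]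
  rw [show br (A x ![v 1]) (A x ![v 0]) = -br (A x ![v 0]) (A x ![v 1]) from hbr _ _,
    show br (A x ![v 2]) (A x ![v 0]) = -br (A x ![v 0]) (A x ![v 2]) from hbr _ _,
    show br (A x ![v 3]) (A x ![v 0]) = -br (A x ![v 0]) (A x ![v 3]) from hbr _ _,
    show br (A x ![v 2]) (A x ![v 1]) = -br (A x ![v 1]) (A x ![v 2]) from hbr _ _,
    show br (A x ![v 3]) (A x ![v 1]) = -br (A x ![v 1]) (A x ![v 3]) from hbr _ _,
    show br (A x ![v 3]) (A x ![v 2]) = -br (A x ![v 2]) (A x ![v 3]) from hbr _ _]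
  simp only [map_neg, LinearMap.neg_apply, hρh_action, hβρ]
  rw [hBsym ![v 2, v 3] (v 1) (v 0), hBsym ![v 1, v 3] (v 2) (v 0),
    hBsym ![v 0, v 3] (v 2) (v 1), hBsym ![v 1, v 2] (v 3) (v 0),
    hBsym ![v 0, v 2] (v 3) (v 1), hBsym ![v 0, v 1] (v 3) (v 2)]
  module
end
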